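/- arXiv:1710.00393 — 5 statements merged into one kernel-verified Lean document; each statement's English description precedes it below -/
import Mathlib

section
/- Let G be a countable discrete group acting continuously on a compact metrizable space X, and let m ∈ ℕ. Then the action has m-comparison if and only if A ≺ₘ B for every closed set A ⊆ X and nonempty open set B ⊆ X satisfying μ(A) < μ(B) for all μ ∈ M_G(X). -/
open Pointwise MeasureTheory
open scoped ENNReal NNReal

namespace Kerr

section Basic

variable (G : Type) [Group G] (X : Type) [TopologicalSpace X] [MulAction G X]

/-- The action of `G` on `X` is free. -/
def IsFreeAction : Prop := ∀ (g : G) (x : X), g • x = x → g = 1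

/-- The action of `G` on `X` is minimal: there is no proper nonempty closed invariant subset. -/
def IsMinimalAction : Prop :=
  ∀ C : Set X, IsClosed C → (∀ g : G, g • C ⊆ C) → C = ∅ ∨ C = Set.univ

/-- `X` is zero-dimensional: it has a basis of clopen sets. -/
def ZeroDimensional : Prop :=
  ∀ (x : X) (U : Set X), IsOpen U → x ∈ U → ∃ V : Set X, IsClopen V ∧ x ∈ V ∧ V ⊆ U

/-- The dynamical subequivalence relation `A ≺ₘ B`: every closed subset `C` of `A` admits a
finite open cover `U` together with group elements `s u` and an `(m+1)`-colouring such that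
the translates `s u • u` are contained in `B` and are pairwise disjoint within each colour. -/
def SubEquivM (m : ℕ) (A B : Set X) : Prop :=
  ∀ C : Set X, IsClosed C → C ⊆ A →
    ∃ (U : Finset (Set X)) (s : Set X → G) (col : Set X → Fin (m + 1)),
      (∀ u ∈ U, IsOpen u) ∧
      (C ⊆ ⋃ u ∈ U, u) ∧
      (∀ u ∈ U, s u • u ⊆ B) ∧
      (∀ u ∈ U, ∀ v ∈ U, u ≠ v → col u = col v → Disjoint (s u • u) (s v • v))

/-- `(V, S)` is a tower: the translates `s • V`, `s ∈ S`, are pairwise disjoint. -/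
def IsTower (V : Set X) (S : Finset G) : Prop :=
  ∀ s ∈ S, ∀ t ∈ S, s ≠ t → Disjoint (s • V) (t • V)

/-- The union `S V` of the levels of the tower `(V, S)`. -/
def towerSpan (V : Set X) (S : Finset G) : Set X := ⋃ s ∈ S, s • V

/-- A castle: a family of towers whose spans `Sᵢ Vᵢ` are pairwise disjoint. -/
def IsCastle {I : Type} (V : I → Set X) (S : I → Finset G) : Prop :=
  (∀ i, IsTower G X (V i) (S i)) ∧
  ∀ i j : I, i ≠ j →
    Disjoint (towerSpan G X (V i) (S i)) (towerSpan G X (V j) (S j))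

/-- The collection of towers `{(Vᵢ, Sᵢ)}` covers `X`. -/
def TowersCover {I : Type} (V : I → Set X) (S : I → Finset G) : Prop :=
  (⋃ i, towerSpan G X (V i) (S i)) = Set.univ

/-- The collection of towers `{(Vᵢ, Sᵢ)}` is `E`-Lebesgue. -/
def IsLebesgueTowers {I : Type} (E : Finset G) (V : I → Set X) (S : I → Finset G) : Prop :=
  ∀ x : X, ∃ i : I, ∃ t ∈ S i, x ∈ t • V i ∧ ∀ e ∈ E, e * t ∈ S i

/-- The family `{Sᵢ Vᵢ}` has chromatic number at most `d`. -/
def ChromaticLE {I : Type} (V : I → Set X) (S : I → Finset G) (d : ℕ) : Prop :=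
  ∃ col : I → Fin d, ∀ i j : I, i ≠ j → col i = col j →
    Disjoint (towerSpan G X (V i) (S i)) (towerSpan G X (V j) (S j))

/-- `towdim(X, G) ≤ d`. -/
def TowDimLE (d : ℕ) : Prop :=
  ∀ E : Finset G, ∃ (I : Type) (V : I → Set X) (S : I → Finset G),
    (∀ i, IsOpen (V i)) ∧ (∀ i, IsTower G X (V i) (S i)) ∧
    TowersCover G X V S ∧ IsLebesgueTowers G X E V S ∧ ChromaticLE G X V S (d + 1)

/-- The tower dimension of the action, with value `⊤` if it is infinite. -/
noncomputable def towdim : ℕ∞ := sInf {n : ℕ∞ | ∃ d : ℕ, n = (d : ℕ∞) ∧ TowDimLE G X d}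

/-- A Borel measure on `X` is invariant under the `G`-action. -/
def InvariantMeasure [MeasurableSpace X] (μ : Measure X) : Prop :=
  ∀ g : G, Measure.map (fun x : X => g • x) μ = μ

/-- The action has `m`-comparison. -/
def HasComparisonM [MeasurableSpace X] (m : ℕ) : Prop :=
  ∀ A B : Set X, IsOpen A → IsOpen B → A.Nonempty → B.Nonempty →
    (∀ μ : Measure X, IsProbabilityMeasure μ → InvariantMeasure G X μ → μ A < μ B) →
    SubEquivM G X m A B

/-- `μ` is an ergodic `G`-invariant Borel probability measure, i.e. an extreme point of the
convex set of invariant Borel probability measures. -/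
def IsErgodicInvariant [MeasurableSpace X] (μ : Measure X) : Prop :=
  IsProbabilityMeasure μ ∧ InvariantMeasure G X μ ∧
  ∀ (μ₁ μ₂ : Measure X) (t : ℝ≥0∞),
    IsProbabilityMeasure μ₁ → InvariantMeasure G X μ₁ →
    IsProbabilityMeasure μ₂ → InvariantMeasure G X μ₂ →
    0 < t → t < 1 → μ = t • μ₁ + (1 - t) • μ₂ → μ₁ = μ ∧ μ₂ = μ

end Basic

section Cov

variable (X : Type) [TopologicalSpace X]

/-- The Lebesgue covering dimension of `X` is at most `d`. -/
def CovDimLE (d : ℕ) : Prop :=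
  ∀ U : Finset (Set X), (∀ u ∈ U, IsOpen u) → (⋃ u ∈ U, u) = Set.univ →
    ∃ V : Finset (Set X), (∀ v ∈ V, IsOpen v) ∧ ((⋃ v ∈ V, v) = Set.univ) ∧
      (∀ v ∈ V, ∃ u ∈ U, v ⊆ u) ∧
      ∀ x : X, ({v : Set X | v ∈ V ∧ x ∈ v}).ncard ≤ d + 1

/-- The Lebesgue covering dimension of `X`, with value `⊤` if it is infinite. -/
noncomputable def covdim : ℕ∞ := sInf {n : ℕ∞ | ∃ d : ℕ, n = (d : ℕ∞) ∧ CovDimLE X d}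

end Cov

section Folner

variable (G : Type) [Group G]

/-- `S` is a nonempty `(K, δ)`-invariant finite subset of `G`. -/
def FolnerInv [DecidableEq G] (K : Finset G) (δ : ℝ) (S : Finset G) : Prop :=
  S.Nonempty ∧ ∀ s ∈ K, ((symmDiff (s • S) S).card : ℝ) < δ * (S.card : ℝ)

/-- `G` is amenable: it satisfies the Følner condition. -/
def AmenableFolner [DecidableEq G] : Prop :=
  ∀ (K : Finset G) (δ : ℝ), 0 < δ → ∃ S : Finset G, FolnerInv G K δ S

/-- The asymptotic dimension of `G` is at most `d`. -/
def AsDimLE (d : ℕ) : Prop :=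
  ∀ E : Finset G, ∃ (𝒰 : Set (Set G)) (F : Finset G),
    (∀ g : G, {u : Set G | u ∈ 𝒰 ∧ g ∈ u}.Finite ∧
      {u : Set G | u ∈ 𝒰 ∧ g ∈ u}.ncard ≤ d + 1) ∧
    (∀ u ∈ 𝒰, ∃ t : G, u ⊆ (fun f : G => f * t) '' (F : Set G)) ∧
    (∀ t : G, ∃ u ∈ 𝒰, (fun e : G => e * t) '' (E : Set G) ⊆ u)

/-- The asymptotic dimension of `G`, with value `⊤` if it is infinite. -/
noncomputable def asdim : ℕ∞ := sInf {n : ℕ∞ | ∃ d : ℕ, n = (d : ℕ∞) ∧ AsDimLE G d}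

end Folner

section AmDimDad

variable (G : Type) [Group G] (X : Type) [TopologicalSpace X] [MulAction G X]

/-- The amenability dimension of the action is at most `d`: for every finite `F ⊆ G` and
`ε > 0` there is a continuous map `φ : X → Δ_d(G) ⊆ ℓ¹(G)` which is `(F, ε)`-approximately
equivariant. -/
def AmDimLE (d : ℕ) : Prop :=
  ∀ (F : Finset G) (ε : ℝ), 0 < ε →
    ∃ φ : X → lp (fun _ : G => ℝ) 1,
      Continuous φ ∧
      (∀ (x : X) (t : G), 0 ≤ (φ x : ∀ _ : G, ℝ) t) ∧
      (∀ x : X, (∑' t : G, (φ x : ∀ _ : G, ℝ) t) = 1) ∧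
      (∀ x : X, (Function.support (φ x : ∀ _ : G, ℝ)).Finite ∧
        (Function.support (φ x : ∀ _ : G, ℝ)).ncard ≤ d + 1) ∧
      ∀ s ∈ F, ∀ x : X,
        (∑' t : G, |(φ (s • x) : ∀ _ : G, ℝ) t - (φ x : ∀ _ : G, ℝ) (s⁻¹ * t)|) < ε

/-- The amenability dimension, with value `⊤` if it is infinite. -/
noncomputable def amdim : ℕ∞ := sInf {n : ℕ∞ | ∃ d : ℕ, n = (d : ℕ∞) ∧ AmDimLE G X d}

/-- The dynamic asymptotic dimension of the action is at most `d`. -/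
def DadLE (d : ℕ) : Prop :=
  ∀ E : Finset G, ∃ (F : Finset G) (U : Finset (Set X)),
    (∀ u ∈ U, IsOpen u) ∧ U.card = d + 1 ∧ ((⋃ u ∈ U, u) = Set.univ) ∧
    ∀ u ∈ U, ∀ x ∈ u, ∀ l : List G, (∀ s ∈ l, s ∈ E) →
      (∀ k ≤ l.length, (l.take k).foldl (fun (y : X) (s : G) => s • y) x ∈ u) →
      (l.foldl (fun (g : G) (s : G) => s * g) 1) ∈ F

/-- The dynamic asymptotic dimension, with value `⊤` if it is infinite. -/
noncomputable def daddim : ℕ∞ := sInf {n : ℕ∞ | ∃ d : ℕ, n = (d : ℕ∞) ∧ DadLE G X d}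

end AmDimDad

section MetricDefs

variable (G : Type) [Group G] (X : Type) [MetricSpace X] [MulAction G X]

/-- The fine tower dimension of the action is at most `d`. -/
def FTowDimLE (d : ℕ) : Prop :=
  ∀ (E : Finset G) (δ : ℝ), 0 < δ →
    ∃ (I : Type) (V : I → Set X) (S : I → Finset G),
      (∀ i, IsOpen (V i)) ∧ (∀ i, IsTower G X (V i) (S i)) ∧
      TowersCover G X V S ∧ IsLebesgueTowers G X E V S ∧
      (∀ i, ∀ s ∈ S i, Metric.diam (s • V i) < δ) ∧
      ChromaticLE G X V S (d + 1)

/-- The fine tower dimension, with value `⊤` if it is infinite. -/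
noncomputable def ftowdim : ℕ∞ := sInf {n : ℕ∞ | ∃ d : ℕ, n = (d : ℕ∞) ∧ FTowDimLE G X d}

variable [DecidableEq G]

/-- The action is almost finite. -/
def AlmostFinite : Prop :=
  ∀ (n : ℕ) (K : Finset G) (δ : ℝ), 0 < n → 0 < δ →
    ∃ (I : Type) (_ : Fintype I) (V : I → Set X) (S S' : I → Finset G),
      (∀ i, IsOpen (V i)) ∧ IsCastle G X V S ∧
      (∀ i, FolnerInv G K δ (S i)) ∧
      (∀ i, ∀ s ∈ S i, Metric.diam (s • V i) < δ) ∧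
      (∀ i, S' i ⊆ S i) ∧
      (∀ i, ((S' i).card : ℝ) < ((S i).card : ℝ) / (n : ℝ)) ∧
      SubEquivM G X 0 (Set.univ \ ⋃ i, towerSpan G X (V i) (S i))
        (⋃ i, towerSpan G X (V i) (S' i))

/-- The action is `m`-almost finite. -/
def MAlmostFinite (m : ℕ) : Prop :=
  ∀ (n : ℕ) (K : Finset G) (δ : ℝ), 0 < n → 0 < δ →
    ∃ (I : Type) (V : I → Set X) (S S' : I → Finset G),
      (∀ i, IsOpen (V i)) ∧ (∀ i, IsTower G X (V i) (S i)) ∧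
      (∀ i, FolnerInv G K δ (S i)) ∧
      (∀ i, ∀ s ∈ S i, Metric.diam (s • V i) < δ) ∧
      ChromaticLE G X V S (m + 1) ∧
      (∀ i, S' i ⊆ S i) ∧
      (∀ i, ((S' i).card : ℝ) < ((S i).card : ℝ) / (n : ℝ)) ∧
      SubEquivM G X 0 (Set.univ \ ⋃ i, towerSpan G X (V i) (S i))
        (⋃ i, towerSpan G X (V i) (S' i))

/-- The action is coarsely almost finite. -/
def CoarselyAlmostFinite : Prop :=
  ∀ (n : ℕ) (K : Finset G) (δ : ℝ), 0 < n → 0 < δ →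
    ∃ (I : Type) (_ : Fintype I) (V : I → Set X) (S S' : I → Finset G),
      (∀ i, IsOpen (V i)) ∧ (∀ i, IsTower G X (V i) (S i)) ∧
      IsCastle G X (fun i => closure (V i)) S ∧
      (∀ i, FolnerInv G K δ (S i)) ∧
      (∀ i, S' i ⊆ S i) ∧
      (∀ i, ((S' i).card : ℝ) < ((S i).card : ℝ) / (n : ℝ)) ∧
      SubEquivM G X 0 (Set.univ \ ⋃ i, towerSpan G X (V i) (S i))
        (⋃ i, towerSpan G X (V i) (S' i))

end MetricDefs

section TypeSemigroup

variable (G : Type) [Group G] (X : Type) [TopologicalSpace X] [MulAction G X]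

/-- The elementary relation of dynamical equidecomposability on `C(X, ℤ≥0)`:
`f ∼ g` if `f = Σ hₖ` and `g = Σ α_{sₖ}(hₖ)` for continuous `hₖ : X → ℕ` and `sₖ ∈ G`. -/
def TypeRel (f g : X → ℕ) : Prop :=
  ∃ (n : ℕ) (h : Fin n → X → ℕ) (s : Fin n → G),
    (∀ k, Continuous (h k)) ∧
    (∀ x : X, (∑ k, h k x) = f x) ∧
    (∀ x : X, (∑ k, h k ((s k)⁻¹ • x)) = g x)

/-- The equivalence relation defining the clopen type semigroup `S(X, G)`. -/
def TypeEquiv : (X → ℕ) → (X → ℕ) → Prop := Relation.EqvGen (TypeRel G X)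

/-- The algebraic order on the type semigroup: `[f] ≤ [g]` iff `[f] + [h] = [g]` for some `h`. -/
def TypeLE (f g : X → ℕ) : Prop :=
  ∃ h : X → ℕ, Continuous h ∧ TypeEquiv G X (fun x => f x + h x) g

/-- The type semigroup `S(X, G)` is almost unperforated. -/
def TypeAlmostUnperforated : Prop :=
  ∀ f g : X → ℕ, Continuous f → Continuous g →
    ∀ n : ℕ, TypeLE G X (fun x => (n + 1) * f x) (fun x => n * g x) → TypeLE G X f g

end TypeSemigroup

end Kerr

namespace Kerr


section Prop34Aux

open Filter Topology TopologicalSpace Metric Set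

/-- Key compactness lemma: if a closed set `C` has smaller measure than `B` for every
invariant Borel probability measure, then some open neighbourhood of `C` does as well.
The proof constructs a limit invariant measure via an ultrafilter limit of contents. -/
lemma exists_open_dominating (G X : Type) [Group G]
    [TopologicalSpace X] [CompactSpace X] [MetrizableSpace X]
    [MeasurableSpace X] [BorelSpace X]
    [MulAction G X] [ContinuousConstSMul G X]
    {C B : Set X} (hC : IsClosed C) (hCne : C.Nonempty) (hB : IsOpen B)
    (h : ∀ μ : Measure X, IsProbabilityMeasure μ → InvariantMeasure G X μ → μ C < μ B) :
    ∃ U : Set X, IsOpen U ∧ C ⊆ U ∧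
      ∀ μ : Measure X, IsProbabilityMeasure μ → InvariantMeasure G X μ → μ U < μ B := by
  by_contra hcon
  push_neg at hcon
  letI : MetricSpace X := metrizableSpaceMetric X
  set r : ℕ → ℝ := fun n => 1 / (n + 1) with hr
  have hrpos : ∀ n, 0 < r n := fun n => by positivity
  have hranti : ∀ m n : ℕ, m ≤ n → r n ≤ r m := fun m n hmn => by
    apply one_div_le_one_div_of_le (by positivity)
    exact add_le_add_left (Nat.cast_le.2 hmn) 1
  set U : ℕ → Set X := fun n => {x | infDist x C < r n} with hU
  have hUopen : ∀ n, IsOpen (U n) := fun n =>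
    isOpen_lt (continuous_infDist_pt C) continuous_const
  have hCU : ∀ n, C ⊆ U n := fun n x hx => by
    simp only [U, mem_setOf_eq, infDist_zero_of_mem hx]; exact hrpos n
  choose μ hprob hinv hBU using fun n => hcon (U n) (hUopen n) (hCU n)
  -- the closed "shells" around `C`
  set F : ℕ → Set X := fun m => {x | infDist x C ≤ r m} with hF
  have hFclosed : ∀ m, IsClosed (F m) :=
    fun m => isClosed_le (continuous_infDist_pt C) continuous_const
  have hFanti : Antitone F := fun m n hmn x hx => le_trans hx (hranti m n hmn)
  have hUF : ∀ m n, m ≤ n → U n ⊆ F m := fun m n hmn x hx =>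
    le_trans (le_of_lt hx) (hranti m n hmn)
  have hFC : (⋂ m, F m) = C := by
    ext x
    simp only [mem_iInter, F, mem_setOf_eq]
    constructor
    · intro hx
      have h0 : infDist x C ≤ 0 := by
        by_contra hpos
        push_neg at hpos
        obtain ⟨n, hn⟩ := exists_nat_one_div_lt hpos
        exact absurd (hx n) (not_le.2 hn)
      exact (hC.mem_iff_infDist_zero hCne).2 (le_antisymm h0 infDist_nonneg)
    · intro hx m
      rw [infDist_zero_of_mem hx]
      exact (hrpos m).le
  -- ultrafilter limit of the measures, as a content
  set 𝒰 : Ultrafilter ℕ := Ultrafilter.of atTop with h𝒰def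
  have h𝒰 : (↑𝒰 : Filter ℕ) ≤ atTop := Ultrafilter.of_le _
  set L : Set X → ℝ≥0∞ := fun S => (𝒰.map fun n => μ n S).lim with hLdef
  have hL : ∀ S : Set X, Tendsto (fun n => μ n S) 𝒰 (𝓝 (L S)) := fun S => by
    exact (𝒰.map fun n => μ n S).le_nhds_lim
  have hLle : ∀ S T : Set X, (∀ᶠ n in 𝒰, μ n S ≤ μ n T) → L S ≤ L T := fun S T hev =>
    le_of_tendsto_of_tendsto (hL S) (hL T) hev
  have hL1 : ∀ S, L S ≤ 1 := fun S =>
    le_of_tendsto (hL S)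
      (Eventually.of_forall fun n => (hprob n).measure_univ ▸ measure_mono (subset_univ S))
  have hLne : ∀ S, L S ≠ ∞ := fun S => ((hL1 S).trans_lt ENNReal.one_lt_top).ne
  have hLuniv : L univ = 1 := by
    refine tendsto_nhds_unique (hL univ) ?_
    have huu : (fun n => μ n univ) = fun _ => (1 : ℝ≥0∞) := funext fun n => (hprob n).measure_univ
    rw [huu]; exact tendsto_const_nhds
  set lam : Content X :=
    { toFun := fun K => (L K).toNNReal
      mono' := fun K₁ K₂ hsub => by
        have h := hLle K₁ K₂ (Eventually.of_forall fun n => measure_mono hsub)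
        exact ENNReal.toNNReal_mono (hLne _) h
      sup_disjoint' := fun K₁ K₂ hdis h1 h2 => by
        have hadd : L (K₁ ⊔ K₂ : Compacts X) = L K₁ + L K₂ := by
          refine tendsto_nhds_unique ?_ ((hL (K₁ : Set X)).add (hL (K₂ : Set X)))
          refine (hL ((K₁ ⊔ K₂ : Compacts X) : Set X)).congr fun n => ?_
          simp only [Compacts.coe_sup]
          exact measure_union hdis h2.measurableSet
        simp only [hadd, ENNReal.toNNReal_add (hLne _) (hLne _)]
      sup_le' := fun K₁ K₂ => by
        have h : L (K₁ ⊔ K₂ : Compacts X) ≤ L K₁ + L K₂ := by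
          refine le_of_tendsto_of_tendsto (hL _) ((hL (K₁ : Set X)).add (hL (K₂ : Set X)))
            (Eventually.of_forall fun n => ?_)
          simp only [Compacts.coe_sup]
          exact measure_union_le _ _
        have h' := ENNReal.toNNReal_mono (ENNReal.add_ne_top.2 ⟨hLne _, hLne _⟩) h
        simpa [ENNReal.toNNReal_add (hLne _) (hLne _)] using h' } with hlamdef
  have lam_eq : ∀ K : Compacts X, (lam K : ℝ≥0∞) = L K := fun K =>
    ENNReal.coe_toNNReal (hLne _)
  set ν : Measure X := lam.measure with hν
  -- ν is a probability measure
  have hνuniv : ν univ = 1 := by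
    rw [hν, Content.measure_apply _ MeasurableSet.univ,
      lam.outerMeasure_of_isOpen univ isOpen_univ]
    refine le_antisymm ?_ ?_
    · refine (lam.innerContent_le ⟨univ, isOpen_univ⟩ ⟨univ, isCompact_univ⟩ subset_rfl).trans ?_
      rw [lam_eq]; exact hLuniv.le
    · refine le_trans ?_ (lam.le_innerContent ⟨univ, isCompact_univ⟩ ⟨univ, isOpen_univ⟩
        subset_rfl)
      rw [lam_eq]; exact hLuniv.ge
  have hνprob : IsProbabilityMeasure ν := ⟨hνuniv⟩
  -- ν is invariant
  have hμsmul : ∀ (g : G) (S : Set X), MeasurableSet S →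
      ∀ n, μ n ((fun x => g • x) '' S) = μ n S := fun g S hS n => by
    conv_rhs => rw [← hinv n g⁻¹]
    rw [Measure.map_apply (continuous_const_smul (g⁻¹ : G)).measurable hS]
    congr 1
    rw [Set.preimage_smul, inv_inv, ← Set.image_smul]
  have hK_smul : ∀ (g : G), ∀ ⦃K : Compacts X⦄,
      lam (K.map _ (Homeomorph.smul g).continuous) = lam K := by
    intro g K
    rw [lam_eq, lam_eq]
    have h1 : Tendsto (fun n => μ n ((fun x => g • x) '' (K : Set X))) 𝒰
        (𝓝 (L ((fun x => g • x) '' (K : Set X)))) := hL _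
    have h2 : Tendsto (fun n => μ n ((fun x => g • x) '' (K : Set X))) 𝒰
        (𝓝 (L (K : Set X))) :=
      Tendsto.congr (fun n =>
        (hμsmul g K K.isCompact.isClosed.measurableSet n).symm) (hL (K : Set X))
    exact tendsto_nhds_unique h1 h2
  have hνinv : InvariantMeasure G X ν := by
    intro g
    refine Measure.ext fun S hS => ?_
    rw [Measure.map_apply (continuous_const_smul g).measurable hS, hν,
      Content.measure_apply _ (hS.preimage (continuous_const_smul g).measurable),
      Content.measure_apply _ hS]
    exact lam.outerMeasure_preimage (Homeomorph.smul g) (hK_smul g) S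
  -- the key inequality ν B ≤ ν C
  have key : ∀ m, ν B ≤ L (F m) := by
    intro m
    rw [hν, Content.measure_apply _ hB.measurableSet, lam.outerMeasure_of_isOpen B hB,
      Content.innerContent]
    refine iSup_le fun K => iSup_le fun hKB => ?_
    rw [lam_eq]
    refine hLle _ _ ?_
    refine ((eventually_ge_atTop m).filter_mono h𝒰).mono fun n hn => ?_
    calc μ n (K : Set X) ≤ μ n B := measure_mono hKB
      _ ≤ μ n (U n) := hBU n
      _ ≤ μ n (F m) := measure_mono (hUF m n hn)
  have key2 : ∀ m, L (F m) ≤ ν (F m) := by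
    intro m
    rw [hν, Content.measure_apply _ (hFclosed m).measurableSet]
    exact le_trans (le_of_eq (lam_eq ⟨F m, (hFclosed m).isCompact⟩).symm)
      (lam.le_outerMeasure_compacts ⟨F m, (hFclosed m).isCompact⟩)
  have hνC : ν C = ⨅ m, ν (F m) := by
    rw [← hFC]
    exact Antitone.measure_iInter hFanti
      (fun m => (hFclosed m).measurableSet.nullMeasurableSet)
      ⟨0, measure_ne_top _ _⟩
  have hBC : ν B ≤ ν C := by
    rw [hνC]
    exact le_iInf fun m => (key m).trans (key2 m)
  exact absurd (h ν hνprob hνinv) (not_lt.2 hBC)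

end Prop34Aux

/-- Proposition 3.4: `m`-comparison can be tested on closed sets against
nonempty open sets. -/
theorem hasComparisonM_iff_closed_open
    (G X : Type) [Group G] [Countable G]
    [TopologicalSpace X] [CompactSpace X] [TopologicalSpace.MetrizableSpace X]
    [MeasurableSpace X] [BorelSpace X]
    [MulAction G X] [ContinuousConstSMul G X] (m : ℕ) :
    HasComparisonM G X m ↔
      ∀ A B : Set X, IsClosed A → IsOpen B → B.Nonempty →
        (∀ μ : Measure X, IsProbabilityMeasure μ → InvariantMeasure G X μ → μ A < μ B) →
        SubEquivM G X m A B := by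
  constructor
  · intro hcomp A B hA hB hBne hmeas C hCclosed hCA
    rcases C.eq_empty_or_nonempty with rfl | hCne
    · exact ⟨∅, fun _ => 1, fun _ => 0, by simp, by simp, by simp, by simp⟩
    · have h' : ∀ μ : Measure X, IsProbabilityMeasure μ → InvariantMeasure G X μ →
          μ C < μ B := fun μ h1 h2 => (measure_mono hCA).trans_lt (hmeas μ h1 h2)
      obtain ⟨U, hUo, hCU, hU⟩ := exists_open_dominating G X hCclosed hCne hB h'
      exact hcomp U B hUo hB (hCne.mono hCU) hBne hU C hCclosed hCU
  · intro h A B hAopen hBopen hAne hBne hmeas C hCc hCA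
    exact h C B hCc hBopen hBne
      (fun μ h1 h2 => (measure_mono hCA).trans_lt (hmeas μ h1 h2)) C hCc subset_rfl

end Kerr
end

section
/- Let G be a countable discrete group acting continuously on a compact metrizable zero-dimensional space X, let m ∈ ℕ, and let A and B be clopen subsets of X. Then A ≺ₘ B if and only if there exist a clopen partition 𝒫 of A, an s_U ∈ G for every U ∈ 𝒫, and a partition 𝒫 = 𝒫₀ ⊔ ⋯ ⊔ 𝒫ₘ such that for each i = 0,…,m the images s_U U for U ∈ 𝒫ᵢ are pairwise disjoint subsets of B. -/
open Pointwise MeasureTheory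
open scoped ENNReal NNReal

namespace Kerr

/-- Disjointification of a list of sets. -/
def disjList {X : Type} : List (Set X) → List (Set X)
  | [] => []
  | V :: rest => V :: (disjList rest).map (· \ V)

lemma disjList_subset {X : Type} :
    ∀ (l : List (Set X)), ∀ W ∈ disjList l, ∃ V ∈ l, W ⊆ V := by
  intro l
  induction l with
  | nil => intro W hW; simp [disjList] at hW
  | cons V rest ih =>
    intro W hW
    simp only [disjList, List.mem_cons, List.mem_map] at hW
    rcases hW with rfl | ⟨W', hW', rfl⟩
    · exact ⟨_, List.mem_cons_self, subset_rfl⟩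
    · obtain ⟨V', hV', hsub⟩ := ih W' hW'
      exact ⟨V', List.mem_cons_of_mem _ hV', Set.diff_subset.trans hsub⟩

lemma disjList_mem_iff {X : Type} :
    ∀ (l : List (Set X)) (x : X), (∃ W ∈ disjList l, x ∈ W) ↔ ∃ V ∈ l, x ∈ V := by
  intro l
  induction l with
  | nil => intro x; simp [disjList]
  | cons V rest ih =>
    intro x
    simp only [disjList, List.mem_cons, List.mem_map]
    constructor
    · rintro ⟨W, (rfl | ⟨W', hW', rfl⟩), hx⟩
      · exact ⟨W, Or.inl rfl, hx⟩
      · obtain ⟨V', hV', hx'⟩ := (ih x).mp ⟨W', hW', hx.1⟩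
        exact ⟨V', Or.inr hV', hx'⟩
    · rintro ⟨V', (rfl | hV'), hx⟩
      · exact ⟨V', Or.inl rfl, hx⟩
      · by_cases hxV : x ∈ V
        · exact ⟨V, Or.inl rfl, hxV⟩
        · obtain ⟨W, hW, hx'⟩ := (ih x).mpr ⟨V', hV', hx⟩
          exact ⟨W \ V, Or.inr ⟨W, hW, rfl⟩, hx', hxV⟩

lemma disjList_pairwise {X : Type} :
    ∀ (l : List (Set X)), (disjList l).Pairwise Disjoint := by
  intro l
  induction l with
  | nil => simp [disjList]
  | cons V rest ih =>
    refine List.Pairwise.cons ?_ (ih.map _ ?_)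
    · intro W hW
      obtain ⟨W', _, rfl⟩ := List.mem_map.mp hW
      exact disjoint_sdiff_self_right
    · intro a b hab
      exact hab.mono Set.diff_subset Set.diff_subset

lemma disjList_clopen {X : Type} [TopologicalSpace X] :
    ∀ (l : List (Set X)), (∀ V ∈ l, IsClopen V) → ∀ W ∈ disjList l, IsClopen W := by
  intro l
  induction l with
  | nil => intro _ W hW; simp [disjList] at hW
  | cons V rest ih =>
    intro hcl W hW
    simp only [disjList, List.mem_cons, List.mem_map] at hW
    rcases hW with rfl | ⟨W', hW', rfl⟩
    · exact hcl W (List.mem_cons_self)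
    · exact (ih (fun V' hV' => hcl V' (List.mem_cons_of_mem _ hV')) W' hW').diff
        (hcl V (List.mem_cons_self))

/-- Proposition 3.5: on a zero-dimensional space, subequivalence of clopen sets
can be witnessed by a clopen partition. -/
theorem subEquivM_iff_clopen_partition
    (G X : Type) [Group G] [Countable G]
    [TopologicalSpace X] [CompactSpace X] [TopologicalSpace.MetrizableSpace X]
    [MulAction G X] [ContinuousConstSMul G X]
    (hzd : ZeroDimensional X) (m : ℕ)
    (A B : Set X) (hA : IsClopen A) (hB : IsClopen B) :
    SubEquivM G X m A B ↔
      ∃ (P : Finset (Set X)) (s : Set X → G) (col : Set X → Fin (m + 1)),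
        (∀ u ∈ P, IsClopen u) ∧
        (∀ u ∈ P, ∀ v ∈ P, u ≠ v → Disjoint u v) ∧
        ((⋃ u ∈ P, u) = A) ∧
        (∀ u ∈ P, s u • u ⊆ B) ∧
        (∀ u ∈ P, ∀ v ∈ P, u ≠ v → col u = col v → Disjoint (s u • u) (s v • v)) := by
  classical
  constructor
  · intro h
    obtain ⟨U, s, col, hUopen, hcov, hsB, hdisj⟩ := h A hA.isClosed subset_rfl
    have key : ∀ x ∈ A, ∃ V : Set X, IsClopen V ∧ x ∈ V ∧ ∃ u, u ∈ U ∧ V ⊆ u := by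
      intro x hx
      obtain ⟨u, hu, hxu⟩ : ∃ u ∈ U, x ∈ u := by simpa using hcov hx
      obtain ⟨V, hV, hxV, hVu⟩ := hzd x u (hUopen u hu) hxu
      exact ⟨V, hV, hxV, u, hu, hVu⟩
    choose! V hVclopen hxV hVsub using key
    have hAcomp : IsCompact A := hA.isClosed.isCompact
    obtain ⟨T, hT⟩ := hAcomp.elim_finite_subcover (fun x : A => V x)
      (fun x => (hVclopen x x.2).isOpen)
      (fun x hx => Set.mem_iUnion.mpr ⟨⟨x, hx⟩, hxV x hx⟩)
    set l : List (Set X) := T.toList.map (fun i => V i.1 ∩ A) with hl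
    have hlmem : ∀ W ∈ l, IsClopen W ∧ W ⊆ A ∧ ∃ u, u ∈ U ∧ W ⊆ u := by
      intro W hW
      obtain ⟨i, hi, rfl⟩ := List.mem_map.mp hW
      obtain ⟨u, hu, hVu⟩ := hVsub ↑i i.2
      exact ⟨(hVclopen ↑i i.2).inter hA, Set.inter_subset_right, u, hu,
        Set.inter_subset_left.trans hVu⟩
    have hlunion : ∀ x : X, (∃ W ∈ l, x ∈ W) ↔ x ∈ A := by
      intro x
      constructor
      · rintro ⟨W, hW, hx⟩
        exact (hlmem W hW).2.1 hx
      · intro hx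
        obtain ⟨i, hi, hxi⟩ : ∃ i ∈ T, x ∈ V ↑i := by simpa using hT hx
        exact ⟨V ↑i ∩ A, List.mem_map.mpr ⟨i, Finset.mem_toList.mpr hi, rfl⟩, hxi, hx⟩
    set P : Finset (Set X) := (disjList l).toFinset with hP
    have hmemP : ∀ W, W ∈ P ↔ W ∈ disjList l := fun W => List.mem_toFinset
    have hchoose : ∀ W ∈ P, ∃ u, u ∈ U ∧ W ⊆ u := by
      intro W hW
      obtain ⟨V', hV', hsub⟩ := disjList_subset l W ((hmemP W).mp hW)
      obtain ⟨_, _, u, hu, hVu⟩ := hlmem V' hV'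
      exact ⟨u, hu, hsub.trans hVu⟩
    set f : Set X → Set X := fun W =>
      if h : ∃ u, u ∈ U ∧ W ⊆ u then h.choose else ∅ with hfdef
    have hf : ∀ W ∈ P, f W ∈ U ∧ W ⊆ f W := by
      intro W hW
      have h := hchoose W hW
      simp only [hfdef, dif_pos h]
      exact ⟨h.choose_spec.1, h.choose_spec.2⟩
    have hPdisj : ∀ u ∈ P, ∀ v ∈ P, u ≠ v → Disjoint u v := by
      intro u hu v hv huv
      exact (haveI : Std.Symm (Disjoint : Set X → Set X → Prop) := ⟨fun a b hab => hab.symm⟩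
          (disjList_pairwise l).forall)
        ((hmemP u).mp hu) ((hmemP v).mp hv) huv
    refine ⟨P, fun W => s (f W), fun W => col (f W), ?_, hPdisj, ?_, ?_, ?_⟩
    · intro W hW
      exact disjList_clopen l (fun V' hV' => (hlmem V' hV').1) W ((hmemP W).mp hW)
    · ext x
      simp only [Set.mem_iUnion]
      rw [← hlunion x, ← disjList_mem_iff l x]
      constructor
      · rintro ⟨W, hW, hx⟩; exact ⟨W, (hmemP W).mp hW, hx⟩
      · rintro ⟨W, hW, hx⟩; exact ⟨W, (hmemP W).mpr hW, hx⟩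
    · intro W hW
      obtain ⟨hu, hsub⟩ := hf W hW
      exact (Set.smul_set_mono hsub).trans (hsB _ hu)
    · intro u hu v hv huv hcol
      by_cases hfeq : f u = f v
      · have hd : Disjoint u v := hPdisj u hu v hv huv
        show Disjoint (s (f u) • u) (s (f v) • v)
        rw [← Set.image_smul, ← Set.image_smul, hfeq]
        exact (Set.disjoint_image_iff (MulAction.injective _)).mpr hd
      · exact Disjoint.mono (Set.smul_set_mono (hf u hu).2)
          (Set.smul_set_mono (hf v hv).2)
          (hdisj _ (hf u hu).1 _ (hf v hv).1 hfeq hcol)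
  · rintro ⟨P, s, col, hclop, _, hunion, hsB, hdisj⟩ C hC hCA
    exact ⟨P, s, col, fun u hu => (hclop u hu).isOpen,
      by rw [hunion]; exact hCA, hsB, hdisj⟩

end Kerr
end

section
/- Let G be a countable discrete group acting freely and continuously on a compact metrizable space X. Then towdim⁺(X,G) ≤ ftowdim⁺(X,G) ≤ towdim⁺(X,G) · dim⁺(X), where the superscript +1 denotes the dimension plus one. In particular, ftowdim(X,G) < ∞ if and only if towdim(X,G) < ∞ and dim(X) < ∞. -/
open Pointwise MeasureTheory
open scoped ENNReal NNReal

namespace Kerr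

-- ## helpers

section helpers
variable {G : Type} [Group G] {X : Type} [TopologicalSpace X] [MulAction G X]

lemma mem_towerSpan {V : Set X} {S : Finset G} {x : X} :
    x ∈ towerSpan G X V S ↔ ∃ s ∈ S, x ∈ s • V := by
  simp [towerSpan]

lemma towerSpan_mono {V W : Set X} {S : Finset G} (h : V ⊆ W) :
    towerSpan G X V S ⊆ towerSpan G X W S := by
  intro x hx
  rw [mem_towerSpan] at hx ⊢
  obtain ⟨s, hs, hx⟩ := hx
  exact ⟨s, hs, Set.smul_set_mono h hx⟩

lemma disjoint_towerSpan {V W : Set X} {S T : Finset G}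
    (h : ∀ s ∈ S, ∀ t ∈ T, Disjoint (s • V) (t • W)) :
    Disjoint (towerSpan G X V S) (towerSpan G X W T) := by
  rw [Set.disjoint_left]
  intro x hx hx'
  rw [mem_towerSpan] at hx hx'
  obtain ⟨s, hs, hx⟩ := hx
  obtain ⟨t, ht, hx'⟩ := hx'
  exact (h s hs t ht).le_bot ⟨hx, hx'⟩

end helpers

section decomp
variable {X : Type} [MetricSpace X] [CompactSpace X]

open scoped Classical in
/-- A continuous "bump" for an open set, positive exactly on it. -/
noncomputable def bump (v : Set X) (x : X) : ℝ :=
  if (vᶜ : Set X).Nonempty then Metric.infDist x vᶜ else 1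

omit [CompactSpace X] in
lemma bump_eq_of_nonempty {v : Set X} (h : (vᶜ : Set X).Nonempty) (x : X) :
    bump v x = Metric.infDist x vᶜ := by
  unfold bump; rw [if_pos h]

omit [CompactSpace X] in
lemma bump_eq_of_empty {v : Set X} (h : ¬ (vᶜ : Set X).Nonempty) (x : X) :
    bump v x = 1 := by
  unfold bump; rw [if_neg h]

lemma bump_continuous (v : Set X) : Continuous (bump v) := by
  by_cases h : (vᶜ : Set X).Nonempty
  · have : bump v = fun x => Metric.infDist x vᶜ := funext (bump_eq_of_nonempty h)
    rw [this]; exact Metric.continuous_infDist_pt _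
  · have : bump v = fun _ => 1 := funext (bump_eq_of_empty h)
    rw [this]; exact continuous_const

omit [CompactSpace X] in
lemma bump_pos_iff {v : Set X} (hv : IsOpen v) (x : X) : 0 < bump v x ↔ x ∈ v := by
  by_cases h : (vᶜ : Set X).Nonempty
  · rw [bump_eq_of_nonempty h, ← hv.isClosed_compl.notMem_iff_infDist_pos h]
    simp
  · rw [bump_eq_of_empty h]
    rw [Set.not_nonempty_iff_eq_empty, Set.compl_empty_iff] at h
    simp [h]

/-- The decomposition theorem: covering dimension `≤ c` gives arbitrarily fine open covers
that split into `c+1` disjoint subfamilies. -/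
lemma decomposition (c : ℕ) (hc : CovDimLE X c) {η : ℝ} (hη : 0 < η) :
    ∃ (J : Type) (W : J → Set X) (colW : J → Fin (c + 1)),
      (∀ j, IsOpen (W j)) ∧ ((⋃ j, W j) = Set.univ) ∧
      (∀ j, Metric.diam (W j) < η) ∧
      (∀ j j', j ≠ j' → colW j = colW j' → Disjoint (W j) (W j')) := by
  classical
  -- cover by small balls
  obtain ⟨t, ht⟩ := isCompact_univ.elim_finite_subcover
    (fun x : X => Metric.ball x (η/5)) (fun x => Metric.isOpen_ball)
    (fun x _ => Set.mem_iUnion.2 ⟨x, Metric.mem_ball_self (by linarith)⟩)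
  set U : Finset (Set X) := t.image (fun x => Metric.ball x (η/5)) with hU
  have hUopen : ∀ u ∈ U, IsOpen u := by
    intro u hu; simp only [hU, Finset.mem_image] at hu
    obtain ⟨x, _, rfl⟩ := hu; exact Metric.isOpen_ball
  have hUcov : (⋃ u ∈ U, u) = Set.univ := by
    apply Set.eq_univ_of_univ_subset
    intro x hx
    obtain ⟨_, ⟨y, rfl⟩, _, ⟨hy, rfl⟩, hxy⟩ := ht hx
    exact Set.mem_biUnion (Finset.mem_image_of_mem _ hy) hxy
  have hUsmall : ∀ u ∈ U, Metric.diam u < η := by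
    intro u hu; simp only [hU, Finset.mem_image] at hu
    obtain ⟨x, _, rfl⟩ := hu
    calc Metric.diam (Metric.ball x (η/5)) ≤ 2 * (η/5) := Metric.diam_ball (by linarith)
    _ < η := by linarith
  obtain ⟨V, hVopen, hVcov, hVref, hVmult⟩ := hc U hUopen hUcov
  -- the decomposition indexed by nonempty subfamilies of V
  refine ⟨{σ : Finset (Set X) // σ ⊆ V ∧ σ.Nonempty},
    fun σ => {x | ∀ v ∈ σ.1, 0 < bump v x ∧ ∀ u ∈ V \ σ.1, bump u x < bump v x},
    fun σ => ⟨min (σ.1.card - 1) c, by omega⟩, ?_, ?_, ?_, ?_⟩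
  · intro σ
    show IsOpen {x | ∀ v ∈ σ.1, 0 < bump v x ∧ ∀ u ∈ V \ σ.1, bump u x < bump v x}
    have : {x | ∀ v ∈ σ.1, 0 < bump v x ∧ ∀ u ∈ V \ σ.1, bump u x < bump v x}
        = ⋂ v ∈ σ.1, ({x | 0 < bump v x} ∩ ⋂ u ∈ (V \ σ.1), {x | bump u x < bump v x}) := by
      ext x; simp [Set.mem_iInter]
    rw [this]
    refine isOpen_biInter_finset (fun v _ => (isOpen_lt continuous_const (bump_continuous v)).inter
      (isOpen_biInter_finset (fun u _ => isOpen_lt (bump_continuous u) (bump_continuous v))))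
  · apply Set.eq_univ_of_univ_subset
    intro x _
    have hxV : ∃ v ∈ V, x ∈ v := by
      have := hVcov ▸ Set.mem_univ x
      simpa using (hVcov.symm ▸ Set.mem_univ x : x ∈ ⋃ v ∈ V, v)
    obtain ⟨v₀, hv₀V, hv₀x⟩ := hxV
    have hVne : V.Nonempty := ⟨v₀, hv₀V⟩
    obtain ⟨vm, hvmV, hvm⟩ := V.exists_max_image (fun v => bump v x) hVne
    set σ : Finset (Set X) := V.filter (fun v => bump v x = bump vm x) with hσ
    have hvmpos : 0 < bump vm x :=
      lt_of_lt_of_le ((bump_pos_iff (hVopen v₀ hv₀V) x).2 hv₀x) (hvm v₀ hv₀V)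
    have hσsub : σ ⊆ V := Finset.filter_subset _ _
    have hσne : σ.Nonempty := ⟨vm, by simp [hσ, hvmV]⟩
    refine Set.mem_iUnion.2 ⟨⟨σ, hσsub, hσne⟩, ?_⟩
    intro v hv
    simp only [hσ, Finset.mem_filter] at hv
    constructor
    · rw [hv.2]; exact hvmpos
    · intro u hu
      rw [Finset.mem_sdiff] at hu
      rw [hv.2]
      rcases lt_or_eq_of_le (hvm u hu.1) with h | h
      · exact h
      · exact absurd (by simp [hσ, hu.1, h] : u ∈ σ) hu.2
  · intro σ
    obtain ⟨v, hv⟩ := σ.2.2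
    have hsub : {x | ∀ v ∈ σ.1, 0 < bump v x ∧ ∀ u ∈ V \ σ.1, bump u x < bump v x} ⊆ v := by
      intro x hx
      exact (bump_pos_iff (hVopen v (σ.2.1 hv)) x).1 (hx v hv).1
    obtain ⟨u, huU, hvu⟩ := hVref v (σ.2.1 hv)
    calc Metric.diam _ ≤ Metric.diam u :=
          Metric.diam_mono (hsub.trans hvu) Metric.isBounded_of_compactSpace
      _ < η := hUsmall u huU
  · rintro σ τ hne hcol
    rw [Set.disjoint_left]
    intro x hxσ hxτ
    -- x belongs to every member of σ and of τ
    have hmem : ∀ (ρ : {σ : Finset (Set X) // σ ⊆ V ∧ σ.Nonempty}),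
        (∀ v ∈ ρ.1, 0 < bump v x ∧ ∀ u ∈ V \ ρ.1, bump u x < bump v x) →
        (ρ.1 : Set (Set X)) ⊆ {v : Set X | v ∈ V ∧ x ∈ v} := by
      intro ρ hx v hv
      exact ⟨ρ.2.1 hv, (bump_pos_iff (hVopen v (ρ.2.1 hv)) x).1 (hx v hv).1⟩
    have hcards : ∀ (ρ : {σ : Finset (Set X) // σ ⊆ V ∧ σ.Nonempty}),
        (∀ v ∈ ρ.1, 0 < bump v x ∧ ∀ u ∈ V \ ρ.1, bump u x < bump v x) →
        ρ.1.card ≤ c + 1 := by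
      intro ρ hx
      have h1 : (ρ.1 : Set (Set X)).ncard ≤ ({v : Set X | v ∈ V ∧ x ∈ v}).ncard :=
        Set.ncard_le_ncard (hmem ρ hx) (V.finite_toSet.subset (fun v hv => hv.1))
      rw [Set.ncard_coe_finset] at h1
      exact h1.trans (hVmult x)
    have hcσ := hcards σ hxσ
    have hcτ := hcards τ hxτ
    have hcardeq : σ.1.card = τ.1.card := by
      have h1 : 1 ≤ σ.1.card := Finset.card_pos.2 σ.2.2
      have h2 : 1 ≤ τ.1.card := Finset.card_pos.2 τ.2.2
      have := Fin.mk.inj_iff.1 hcol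
      omega
    have hne' : σ.1 ≠ τ.1 := fun h => hne (Subtype.ext h)
    -- find a set in σ \ τ and one in τ \ σ
    have hστ : ∃ v ∈ σ.1, v ∉ τ.1 := by
      by_contra h
      push_neg at h
      exact hne' (Finset.eq_of_subset_of_card_le h (le_of_eq hcardeq.symm))
    have hτσ : ∃ u ∈ τ.1, u ∉ σ.1 := by
      by_contra h
      push_neg at h
      exact hne' (Finset.eq_of_subset_of_card_le h (le_of_eq hcardeq)).symm
    obtain ⟨v, hvσ, hvτ⟩ := hστ
    obtain ⟨u, huτ, huσ⟩ := hτσ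
    have h1 : bump u x < bump v x :=
      (hxσ v hvσ).2 u (Finset.mem_sdiff.2 ⟨τ.2.1 huτ, huσ⟩)
    have h2 : bump v x < bump u x :=
      (hxτ u huτ).2 v (Finset.mem_sdiff.2 ⟨σ.2.1 hvσ, hvτ⟩)
    linarith

end decomp

section main
variable {G : Type} [Group G] {X : Type} [MetricSpace X] [CompactSpace X]
  [MulAction G X] [ContinuousConstSMul G X]

lemma disjoint_smul_set {A B : Set X} (s : G) (h : Disjoint A B) :
    Disjoint (s • A) (s • B) := by
  rw [Set.disjoint_left] at h ⊢
  rintro x ⟨a, ha, rfl⟩ hx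
  rw [Set.smul_mem_smul_set_iff] at hx
  exact h ha hx

lemma unif_smul (T : Finset G) {δ : ℝ} (hδ : 0 < δ) :
    ∃ η > 0, ∀ s ∈ T, ∀ x y : X, dist x y < η → dist (s • x) (s • y) ≤ δ / 3 := by
  classical
  induction T using Finset.induction_on with
  | empty => exact ⟨1, one_pos, fun s hs => absurd hs (by simp)⟩
  | @insert s T hsT ih =>
    obtain ⟨η, hη, hT⟩ := ih
    have hu : UniformContinuous (fun x : X => s • x) :=
      CompactSpace.uniformContinuous_of_continuous (continuous_const_smul s)
    rw [Metric.uniformContinuous_iff] at hu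
    obtain ⟨η', hη', hs'⟩ := hu (δ / 3) (by linarith)
    refine ⟨min η η', lt_min hη hη', ?_⟩
    intro t ht x y hxy
    rcases Finset.mem_insert.1 ht with rfl | ht
    · exact (hs' (lt_of_lt_of_le hxy (min_le_right _ _))).le
    · exact hT t ht x y (lt_of_lt_of_le hxy (min_le_left _ _))

lemma main_construction (d c : ℕ) (hd : TowDimLE G X d) (hc : CovDimLE X c) :
    FTowDimLE G X ((d + 1) * (c + 1) - 1) := by
  classical
  intro E δ hδ
  obtain ⟨I, V, S, hVopen, htower, hcover, hleb, col, hcol⟩ := hd E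
  set O : I → Set X :=
    fun i => ⋃ t : {t : G // t ∈ S i ∧ ∀ e ∈ E, e * t ∈ S i}, (t : G) • V i with hO
  have hOopen : ∀ i, IsOpen (O i) := fun i => isOpen_iUnion (fun t => (hVopen i).smul _)
  have hOcov : (Set.univ : Set X) ⊆ ⋃ i, O i := by
    intro x _
    obtain ⟨i, t, htS, hxt, hEt⟩ := hleb x
    exact Set.mem_iUnion.2 ⟨i, Set.mem_iUnion.2 ⟨⟨t, htS, hEt⟩, hxt⟩⟩
  obtain ⟨ι, hι⟩ := isCompact_univ.elim_finite_subcover O hOopen hOcov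
  set T : Finset G := ι.sup S with hTdef
  obtain ⟨η, hη, hT⟩ := unif_smul (X := X) T hδ
  obtain ⟨J, W, colW, hWopen, hWcov, hWdiam, hWdisj⟩ := decomposition c hc hη
  have hleb' : ∀ x : X, ∃ p : {i : I // i ∈ ι} × J, ∃ t ∈ S p.1.1,
      x ∈ t • (V p.1.1 ∩ W p.2) ∧ ∀ e ∈ E, e * t ∈ S p.1.1 := by
    intro x
    have hx := hι (Set.mem_univ x)
    rw [Set.mem_iUnion₂] at hx
    obtain ⟨i, hiι, hxO⟩ := hx
    obtain ⟨⟨t, htS, hEt⟩, hxt⟩ := Set.mem_iUnion.1 hxO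
    have hxV : t⁻¹ • x ∈ V i := by
      rwa [← Set.mem_smul_set_iff_inv_smul_mem]
    obtain ⟨j, hj⟩ : ∃ j, t⁻¹ • x ∈ W j := Set.mem_iUnion.1 (hWcov ▸ Set.mem_univ (t⁻¹ • x))
    refine ⟨(⟨i, hiι⟩, j), t, htS, ?_, hEt⟩
    rw [Set.mem_smul_set_iff_inv_smul_mem]
    exact ⟨hxV, hj⟩
  have hmul : (d + 1) * (c + 1) - 1 + 1 = (d + 1) * (c + 1) :=
    Nat.succ_pred_eq_of_pos (Nat.mul_pos (Nat.succ_pos d) (Nat.succ_pos c))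
  refine ⟨{i : I // i ∈ ι} × J, fun p => V p.1.1 ∩ W p.2, fun p => S p.1.1,
    fun p => (hVopen p.1.1).inter (hWopen p.2), ?_, ?_, hleb', ?_, ?_⟩
  · intro p s hs t ht hst
    exact (htower p.1.1 s hs t ht hst).mono
      (Set.smul_set_mono Set.inter_subset_left) (Set.smul_set_mono Set.inter_subset_left)
  · apply Set.eq_univ_of_univ_subset
    intro x _
    obtain ⟨p, t, htS, hxt, _⟩ := hleb' x
    exact Set.mem_iUnion.2 ⟨p, mem_towerSpan.2 ⟨t, htS, hxt⟩⟩
  · intro p s hs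
    have hsT : s ∈ T := by
      rw [hTdef, Finset.mem_sup]
      exact ⟨p.1.1, p.1.2, hs⟩
    have hle : Metric.diam (s • (V p.1.1 ∩ W p.2)) ≤ δ / 3 := by
      apply Metric.diam_le_of_forall_dist_le (by linarith)
      rintro x ⟨a, ⟨_, haW⟩, rfl⟩ y ⟨b, ⟨_, hbW⟩, rfl⟩
      exact hT s hsT a b
        (lt_of_le_of_lt (Metric.dist_le_diam_of_mem Metric.isBounded_of_compactSpace haW hbW)
          (hWdiam p.2))
    linarith
  · refine ⟨fun p => Fin.cast hmul (finProdFinEquiv (col p.1.1, colW p.2)), ?_⟩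
    intro p q hpq hcoleq
    have hpair : (col p.1.1, colW p.2) = (col q.1.1, colW q.2) :=
      finProdFinEquiv.injective (Fin.cast_injective hmul hcoleq)
    have h1 : col p.1.1 = col q.1.1 := congrArg Prod.fst hpair
    have h2 : colW p.2 = colW q.2 := congrArg Prod.snd hpair
    by_cases hii : p.1.1 = q.1.1
    · have hj : p.2 ≠ q.2 := by
        intro hjj
        exact hpq (Prod.ext (Subtype.ext hii) hjj)
      have hW := hWdisj p.2 q.2 hj h2
      apply disjoint_towerSpan
      intro s hs t ht
      by_cases hst : s = t
      · subst hst
        exact ((disjoint_smul_set s hW).mono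
          (Set.smul_set_mono Set.inter_subset_right) (Set.smul_set_mono Set.inter_subset_right))
      · have ht' : t ∈ S p.1.1 := by rw [hii]; exact ht
        exact (htower p.1.1 s hs t ht' hst).mono
          (Set.smul_set_mono Set.inter_subset_left)
          (by rw [hii]; exact Set.smul_set_mono Set.inter_subset_left)
    · exact (hcol p.1.1 q.1.1 hii h1).mono
        (towerSpan_mono Set.inter_subset_left) (towerSpan_mono Set.inter_subset_left)

lemma covDimLE_of_ftow (f : ℕ) (hf : FTowDimLE G X f) : CovDimLE X f := by
  classical
  intro U hUopen hUcov
  by_cases hX : Nonempty X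
  case neg =>
    have hXe : IsEmpty X := not_nonempty_iff.1 hX
    refine ⟨∅, by simp, ?_, by simp, by simp⟩
    simp [Set.univ_eq_empty_iff.2 hXe]
  obtain ⟨x₀⟩ := hX
  have hx₀ : x₀ ∈ ⋃ u ∈ U, u := hUcov.symm ▸ Set.mem_univ x₀
  rw [Set.mem_iUnion₂] at hx₀
  obtain ⟨u₀, hu₀, _⟩ := hx₀
  obtain ⟨lam, hlam, hball⟩ := lebesgue_number_lemma_of_metric isCompact_univ
    (c := fun u : {u // u ∈ U} => (u : Set X)) (fun u => hUopen u u.2)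
    (by
      intro x _
      have hx := hUcov.symm ▸ Set.mem_univ x
      rw [Set.mem_iUnion₂] at hx
      obtain ⟨u, hu, hxu⟩ := hx
      exact Set.mem_iUnion.2 ⟨⟨u, hu⟩, hxu⟩)
  obtain ⟨I, V, S, hVopen, htower, hcover, hleb, hdiam, col, hcol⟩ := hf ∅ lam hlam
  have hSopen : ∀ i, IsOpen (towerSpan G X (V i) (S i)) := fun i =>
    isOpen_biUnion (fun s _ => (hVopen i).smul s)
  obtain ⟨ι, hι⟩ := isCompact_univ.elim_finite_subcover
    (fun i => towerSpan G X (V i) (S i)) hSopen (by rw [hcover])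
  set F : Finset (Set X) := ι.biUnion (fun i => (S i).image (fun s => s • V i)) with hF
  have hFmem : ∀ v, v ∈ F ↔ ∃ i, i ∈ ι ∧ ∃ s, s ∈ S i ∧ s • V i = v := by
    intro v
    simp [hF, Finset.mem_biUnion, Finset.mem_image]
  refine ⟨F, ?_, ?_, ?_, ?_⟩
  · intro v hv
    obtain ⟨i, _, s, _, rfl⟩ := (hFmem v).1 hv
    exact (hVopen i).smul s
  · apply Set.eq_univ_of_univ_subset
    intro x _
    have hx := hι (Set.mem_univ x)
    rw [Set.mem_iUnion₂] at hx
    obtain ⟨i, hiι, hxi⟩ := hx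
    obtain ⟨s, hs, hxs⟩ := mem_towerSpan.1 hxi
    exact Set.mem_biUnion ((hFmem _).2 ⟨i, hiι, s, hs, rfl⟩) hxs
  · intro v hv
    obtain ⟨i, _, s, hs, rfl⟩ := (hFmem v).1 hv
    by_cases hne : (s • V i).Nonempty
    · obtain ⟨x, hx⟩ := hne
      obtain ⟨u, hu⟩ := hball x (Set.mem_univ x)
      refine ⟨u, u.2, ?_⟩
      intro y hy
      apply hu
      rw [Metric.mem_ball]
      exact lt_of_le_of_lt
        (Metric.dist_le_diam_of_mem Metric.isBounded_of_compactSpace hy hx) (hdiam i s hs)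
    · rw [Set.not_nonempty_iff_eq_empty] at hne
      exact ⟨u₀, hu₀, by simp [hne]⟩
  · intro x
    set g : Set X → Fin (f + 1) := fun v =>
      if h : ∃ i, i ∈ ι ∧ ∃ s, s ∈ S i ∧ s • V i = v then col h.choose
      else ⟨0, Nat.succ_pos f⟩ with hg
    have hmap : ∀ v ∈ {v : Set X | v ∈ F ∧ x ∈ v}, g v ∈ (Set.univ : Set (Fin (f + 1))) :=
      fun v _ => Set.mem_univ _
    have hinj : Set.InjOn g {v : Set X | v ∈ F ∧ x ∈ v} := by
      rintro v ⟨hvF, hvx⟩ w ⟨hwF, hwx⟩ hgvw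
      by_contra hvw
      have hv' := (hFmem v).1 hvF
      have hw' := (hFmem w).1 hwF
      obtain ⟨hiι, s, hs, hsv⟩ := hv'.choose_spec
      obtain ⟨hjι, t, ht, htw⟩ := hw'.choose_spec
      rw [hg] at hgvw
      simp only [dif_pos hv', dif_pos hw'] at hgvw
      by_cases hij : hv'.choose = hw'.choose
      · -- same tower: distinct levels are disjoint
        have hst : s ≠ t := by
          intro h
          apply hvw
          rw [← hsv, ← htw, ← hij, h]
        have ht' : t ∈ S hv'.choose := by rw [hij]; exact ht
        have hdisj := htower hv'.choose s hs t ht' hst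
        rw [Set.disjoint_left] at hdisj
        exact hdisj (hsv.symm ▸ hvx) (by rw [hij]; exact htw.symm ▸ hwx)
      · have hdisj := hcol hv'.choose hw'.choose hij hgvw
        rw [Set.disjoint_left] at hdisj
        exact hdisj (mem_towerSpan.2 ⟨s, hs, hsv.symm ▸ hvx⟩)
          (mem_towerSpan.2 ⟨t, ht, htw.symm ▸ hwx⟩)
    have := Set.ncard_le_ncard_of_injOn g hmap hinj (Set.finite_univ)
    rwa [Set.ncard_univ, Nat.card_eq_fintype_card, Fintype.card_fin] at this

lemma tow_of_ftow {d : ℕ} (h : FTowDimLE G X d) : TowDimLE G X d := by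
  intro E
  obtain ⟨I, V, S, h1, h2, h3, h4, _, h6⟩ := h E 1 one_pos
  exact ⟨I, V, S, h1, h2, h3, h4, h6⟩

end main

section enat

lemma dimset_le {P : ℕ → Prop} {d : ℕ} (h : P d) :
    sInf {n : ℕ∞ | ∃ k : ℕ, n = (k : ℕ∞) ∧ P k} ≤ (d : ℕ∞) :=
  sInf_le ⟨d, rfl, h⟩

lemma dimset_attained {P : ℕ → Prop}
    (h : sInf {n : ℕ∞ | ∃ k : ℕ, n = (k : ℕ∞) ∧ P k} < ⊤) :
    ∃ k : ℕ, sInf {n : ℕ∞ | ∃ k : ℕ, n = (k : ℕ∞) ∧ P k} = (k : ℕ∞) ∧ P k := by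
  have hne : {n : ℕ∞ | ∃ k : ℕ, n = (k : ℕ∞) ∧ P k}.Nonempty := by
    by_contra hemp
    rw [Set.not_nonempty_iff_eq_empty] at hemp
    rw [hemp, sInf_empty] at h
    exact absurd h (lt_irrefl ⊤)
  exact csInf_mem hne

end enat

/-- Proposition 4.10: `towdim⁺ ≤ ftowdim⁺ ≤ towdim⁺ · dim⁺`; in particular the
fine tower dimension is finite iff both the tower dimension and the covering dimension are. -/
theorem towdim_ftowdim_covdim
    (G X : Type) [Group G] [Countable G]
    [MetricSpace X] [CompactSpace X]
    [MulAction G X] [ContinuousConstSMul G X]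
    (hfree : IsFreeAction G X) :
    towdim G X + 1 ≤ ftowdim G X + 1 ∧
    ftowdim G X + 1 ≤ (towdim G X + 1) * (covdim X + 1) ∧
    (ftowdim G X < ⊤ ↔ towdim G X < ⊤ ∧ covdim X < ⊤) := by
  classical
  -- towdim ≤ ftowdim
  have h01 : towdim G X ≤ ftowdim G X := by
    apply sInf_le_sInf
    rintro n ⟨k, rfl, hk⟩
    exact ⟨k, rfl, tow_of_ftow hk⟩
  have h1 : towdim G X + 1 ≤ ftowdim G X + 1 := add_le_add_left h01 1
  -- the product bound
  have h2 : ftowdim G X + 1 ≤ (towdim G X + 1) * (covdim X + 1) := by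
    by_cases htop : towdim G X = ⊤
    · rw [htop]
      have hne : (covdim X + 1 : ℕ∞) ≠ 0 := by
        intro h
        have : (1 : ℕ∞) ≤ covdim X + 1 := le_add_self
        rw [h] at this
        exact absurd this (by simp)
      rw [top_add, ENat.top_mul hne]
      exact le_top
    by_cases hctop : covdim X = ⊤
    · rw [hctop]
      have hne : (towdim G X + 1 : ℕ∞) ≠ 0 := by
        intro h
        have : (1 : ℕ∞) ≤ towdim G X + 1 := le_add_self
        rw [h] at this
        exact absurd this (by simp)
      rw [top_add, ENat.mul_top hne]
      exact le_top
    obtain ⟨d₀, hd₀, hdP⟩ := dimset_attained (P := TowDimLE G X) (lt_top_iff_ne_top.2 htop)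
    obtain ⟨c₀, hc₀, hcP⟩ := dimset_attained (P := CovDimLE X) (lt_top_iff_ne_top.2 hctop)
    have hm : FTowDimLE G X ((d₀ + 1) * (c₀ + 1) - 1) := main_construction d₀ c₀ hdP hcP
    have hle : ftowdim G X ≤ (((d₀ + 1) * (c₀ + 1) - 1 : ℕ) : ℕ∞) := dimset_le hm
    calc ftowdim G X + 1 ≤ (((d₀ + 1) * (c₀ + 1) - 1 : ℕ) : ℕ∞) + 1 := add_le_add_left hle 1
      _ = (((d₀ + 1) * (c₀ + 1) - 1 + 1 : ℕ) : ℕ∞) := by push_cast; ring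
      _ = (((d₀ + 1) * (c₀ + 1) : ℕ) : ℕ∞) := Nat.cast_inj.mpr
            (Nat.succ_pred_eq_of_pos (Nat.mul_pos (Nat.succ_pos d₀) (Nat.succ_pos c₀)))
      _ = ((d₀ : ℕ∞) + 1) * ((c₀ : ℕ∞) + 1) := by push_cast; ring
      _ = (towdim G X + 1) * (covdim X + 1) := by
          have hd₀' : towdim G X = (d₀ : ℕ∞) := hd₀
          have hc₀' : covdim X = (c₀ : ℕ∞) := hc₀
          rw [hd₀', hc₀']
  refine ⟨h1, h2, ?_⟩
  constructor
  · intro hf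
    obtain ⟨f₀, _, hfP⟩ := dimset_attained (P := FTowDimLE G X) hf
    refine ⟨lt_of_le_of_lt h01 hf, ?_⟩
    have hcov : CovDimLE X f₀ := covDimLE_of_ftow f₀ hfP
    exact lt_of_le_of_lt (dimset_le hcov) (WithTop.coe_lt_top f₀)
  · rintro ⟨ht, hc⟩
    obtain ⟨d₀, _, hdP⟩ := dimset_attained (P := TowDimLE G X) ht
    obtain ⟨c₀, _, hcP⟩ := dimset_attained (P := CovDimLE X) hc
    have hm : FTowDimLE G X ((d₀ + 1) * (c₀ + 1) - 1) := main_construction d₀ c₀ hdP hcP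
    exact lt_of_le_of_lt (dimset_le hm) (WithTop.coe_lt_top _)

end Kerr
end

section
/- Let G be a countable discrete group acting freely and continuously on a compact metrizable space X. Then amdim(X,G) ≤ towdim(X,G). -/
open Pointwise MeasureTheory
open scoped ENNReal NNReal

namespace Kerr


set_option maxHeartbeats 4000000 in
theorem towDimLE_amDimLE (G X : Type) [Group G]
    [TopologicalSpace X] [CompactSpace X] [TopologicalSpace.MetrizableSpace X]
    [MulAction G X] [ContinuousConstSMul G X]
    (d : ℕ) (htd : TowDimLE G X d) : AmDimLE G X d := by
  classical
  intro F ε hε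
  haveI : Fact ((1:ℝ≥0∞) ≤ 1) := ⟨le_rfl⟩
  letI : MetricSpace X := TopologicalSpace.metrizableSpaceMetric X
  -- the enlarged symmetric set B
  set B : Finset G := (F ∪ F⁻¹) ∪ {1} with hBdef
  have hB1 : (1:G) ∈ B := by simp [hBdef]
  have hFB : ∀ s ∈ F, s ∈ B := by
    intro s hs; simp [hBdef, Finset.mem_union, hs]
  have hBinv : ∀ s ∈ B, s⁻¹ ∈ B := by
    intro s hs
    simp only [hBdef, Finset.mem_union, Finset.mem_inv', Finset.mem_singleton] at hs ⊢
    rcases hs with (hs | hs) | hs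
    · exact Or.inl (Or.inr (by simpa using hs))
    · exact Or.inl (Or.inl hs)
    · exact Or.inr (by simp [hs])
  -- choose n
  set n : ℕ := ⌈2*((d:ℝ)+1)/ε⌉₊ + 1 with hndef
  have hn0 : 0 < n := Nat.succ_pos _
  have hnR : (0:ℝ) < n := by exact_mod_cast hn0
  have hn : 2*((d:ℝ)+1)/n < ε := by
    rw [div_lt_iff₀ hnR]
    have h1 : 2*((d:ℝ)+1)/ε < n := by
      rw [hndef]
      push_cast
      have := Nat.le_ceil (2*((d:ℝ)+1)/ε)
      linarith
    calc 2*((d:ℝ)+1) = (2*((d:ℝ)+1)/ε) * ε := by field_simp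
      _ < n * ε := by
          apply mul_lt_mul_of_pos_right h1 hε
      _ = ε * n := mul_comm _ _
  -- apply tower dimension hypothesis
  obtain ⟨I, V, S, hVopen, htower, hcover, hleb, hchrom⟩ := htd (B ^ n)
  obtain ⟨col, hcol⟩ := hchrom
  -- power monotonicity
  have hpow_mono : ∀ a b : ℕ, a ≤ b → (B ^ a : Finset G) ⊆ B ^ b := by
    intro a b hab
    induction b, hab using Nat.le_induction with
    | base => exact Finset.Subset.refl _
    | succ b hab ih =>
        intro g hg
        have : g * 1 ∈ B ^ b * B := Finset.mul_mem_mul (ih hg) hB1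
        simpa [pow_succ] using this
  have hBpow : ∀ k : ℕ, ∀ b ∈ B, b ∈ B ^ (k+1) := by
    intro k b hb
    apply hpow_mono 1 (k+1) (by omega)
    simpa [pow_one] using hb
  -- the weight functions
  set P : I → G → ℕ → Prop := fun i t k => ∀ b ∈ B ^ (k+1), b * t ∈ S i with hPdef
  set cnt : I → G → ℕ := fun i t => ((Finset.range n).filter (P i t)).card with hcntdef
  set w : I → G → ℝ := fun i t => (cnt i t : ℝ) / n with hwdef
  have hw_nonneg : ∀ i t, 0 ≤ w i t := fun i t => by positivity
  have hcnt_le_n : ∀ i t, cnt i t ≤ n := fun i t => by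
    calc cnt i t ≤ (Finset.range n).card := Finset.card_filter_le _ _
      _ = n := Finset.card_range n
  have hw_le_one : ∀ i t, w i t ≤ 1 := by
    intro i t
    rw [hwdef]
    rw [div_le_one hnR]
    exact_mod_cast hcnt_le_n i t
  have hw_pos_mem : ∀ i t, 0 < w i t → ∀ b ∈ B, b * t ∈ S i := by
    intro i t hpos b hb
    have hc : 0 < cnt i t := by
      by_contra h
      push_neg at h
      interval_cases h' : cnt i t
      · rw [hwdef] at hpos; simp [h'] at hpos
    obtain ⟨k, hk⟩ := Finset.card_pos.1 hc
    rw [Finset.mem_filter] at hk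
    exact hk.2 b (hBpow k b hb)
  have hw_deep : ∀ i t, (∀ e ∈ B ^ n, e * t ∈ S i) → w i t = 1 := by
    intro i t hdeep
    have : (Finset.range n).filter (P i t) = Finset.range n := by
      apply Finset.filter_true_of_mem
      intro k hk
      intro b hb
      exact hdeep b (hpow_mono (k+1) n (Finset.mem_range.1 hk) hb)
    rw [hwdef, hcntdef]
    simp only [this, Finset.card_range]
    field_simp
  have herase : ∀ (s : Finset ℕ), s.card ≤ (s.erase 0).card + 1 := by
    intro s
    by_cases h0 : 0 ∈ s
    · rw [Finset.card_erase_of_mem h0]; omega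
    · rw [Finset.erase_eq_of_notMem h0]; omega
  have hcnt_lip : ∀ i t (s : G), s ∈ B → cnt i t ≤ cnt i (s⁻¹ * t) + 1 := by
    intro i t s hs
    have hmap : ∀ k ∈ ((Finset.range n).filter (P i t)).erase 0,
        k - 1 ∈ (Finset.range n).filter (P i (s⁻¹ * t)) := by
      intro k hk
      rw [Finset.mem_erase, Finset.mem_filter] at hk
      obtain ⟨hk0, hkr, hkP⟩ := hk
      rw [Finset.mem_filter, Finset.mem_range]
      refine ⟨lt_of_le_of_lt (Nat.sub_le _ _) (Finset.mem_range.1 hkr), ?_⟩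
      intro b hb
      have hks : k - 1 + 1 = k := Nat.succ_pred_eq_of_pos (Nat.pos_of_ne_zero hk0)
      rw [hks] at hb
      have hb' : b * s⁻¹ ∈ B ^ (k + 1) := by
        rw [pow_succ]
        exact Finset.mul_mem_mul hb (hBinv s hs)
      have := hkP _ hb'
      rwa [mul_assoc] at this
    have hinj : Set.InjOn (fun k => k - 1) ↑(((Finset.range n).filter (P i t)).erase 0) := by
      intro a ha b hb hab
      simp only [Finset.coe_erase, Set.mem_diff, Finset.mem_coe,
        Set.mem_singleton_iff] at ha hb
      simp only at hab
      omega
    have hcard := Finset.card_le_card_of_injOn (fun k => k - 1) hmap hinj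
    have h2 := herase ((Finset.range n).filter (P i t))
    simp only [hcntdef]
    omega
  have hw_lip : ∀ i t (s : G), s ∈ B → |w i t - w i (s⁻¹ * t)| ≤ 1/n := by
    intro i t s hs
    have h1 := hcnt_lip i t s hs
    have h2 := hcnt_lip i (s⁻¹ * t) s⁻¹ (hBinv s hs)
    rw [inv_inv, mul_inv_cancel_left] at h2
    rw [hwdef]
    simp only [div_sub_div_same]
    rw [abs_div, abs_of_pos hnR]
    rw [div_le_div_iff_of_pos_right hnR]
    have h1' : (cnt i t : ℝ) ≤ (cnt i (s⁻¹ * t) : ℝ) + 1 := by exact_mod_cast h1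
    have h2' : (cnt i (s⁻¹ * t) : ℝ) ≤ (cnt i t : ℝ) + 1 := by exact_mod_cast h2
    rw [abs_le]
    constructor <;> linarith
  -- cover data
  have key : ∀ x : X, ∃ (i : I) (t : G) (r : ℝ), 0 < r ∧ t ∈ S i ∧
      (∀ e ∈ B ^ n, e * t ∈ S i) ∧ Metric.closedBall x (2*r) ⊆ t • V i := by
    intro x
    obtain ⟨i, t, ht, hx, hdeep⟩ := hleb x
    have hopen : IsOpen (t • V i) := (hVopen i).smul t
    obtain ⟨r', hr', hball⟩ := Metric.isOpen_iff.1 hopen x hx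
    refine ⟨i, t, r'/3, by linarith, ht, hdeep, ?_⟩
    intro y hy
    apply hball
    rw [Metric.mem_closedBall] at hy
    rw [Metric.mem_ball]
    linarith
  choose iz tz rz hrz htz hdeepz hballz using key
  have hcov2 : (Set.univ : Set X) ⊆ ⋃ z : X, Metric.ball z (rz z) := by
    intro x _
    exact Set.mem_iUnion.2 ⟨x, Metric.mem_ball_self (hrz x)⟩
  obtain ⟨Z, hZ⟩ := isCompact_univ.elim_finite_subcover
    (fun z : X => Metric.ball z (rz z)) (fun z => Metric.isOpen_ball) hcov2
  -- bump functions
  set q : X → X → ℝ := fun z y => min 1 (max 0 (2 - dist y z / rz z)) with hqdef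
  have hq_cont : ∀ z, Continuous (q z) := by
    intro z
    apply Continuous.min continuous_const
    apply Continuous.max continuous_const
    exact (continuous_const.sub ((continuous_dist.comp
      (Continuous.prodMk continuous_id continuous_const)).div_const _))
  have hq_nonneg : ∀ z y, 0 ≤ q z y := fun z y => le_min zero_le_one (le_max_left _ _)
  have hq_le_one : ∀ z y, q z y ≤ 1 := fun z y => min_le_left _ _
  have hq_one : ∀ z y, dist y z ≤ rz z → q z y = 1 := by
    intro z y hd
    have hd1 : dist y z / rz z ≤ 1 := (div_le_one (hrz z)).2 hd
    simp only [hqdef]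
    have : (1:ℝ) ≤ max 0 (2 - dist y z / rz z) := le_max_of_le_right (by linarith)
    exact min_eq_left this
  have hq_supp : ∀ z y, 0 < q z y → y ∈ Metric.closedBall z (2 * rz z) := by
    intro z y hq
    rw [Metric.mem_closedBall]
    by_contra hcon
    push_neg at hcon
    have hgt : 2 < dist y z / rz z := by
      rw [lt_div_iff₀ (hrz z)]
      linarith
    have hmax : max 0 (2 - dist y z / rz z) = 0 := max_eq_left (by linarith)
    simp only [hqdef, hmax] at hq
    simp at hq
  -- tower-level functions
  set I₀ : Finset I := Z.image iz with hI0def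
  set h : I → X → ℝ := fun i y =>
    min 1 (∑ z ∈ Z.filter (fun z => iz z = i), q z ((tz z) • y)) with hhdef
  have hh_cont : ∀ i, Continuous (h i) := by
    intro i
    apply Continuous.min continuous_const
    apply continuous_finset_sum
    intro z _
    exact (hq_cont z).comp (continuous_const_smul _)
  have hh_nonneg : ∀ i y, 0 ≤ h i y := by
    intro i y
    apply le_min zero_le_one
    exact Finset.sum_nonneg fun z _ => hq_nonneg _ _
  have hh_le_one : ∀ i y, h i y ≤ 1 := fun i y => min_le_left _ _
  have hh_supp : ∀ i y, 0 < h i y → y ∈ V i := by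
    intro i y hpos
    simp only [hhdef] at hpos
    have hsum : 0 < ∑ z ∈ Z.filter (fun z => iz z = i), q z ((tz z) • y) :=
      (lt_min_iff.1 hpos).2
    have hex : ∃ z ∈ Z.filter (fun z => iz z = i), 0 < q z ((tz z) • y) := by
      by_contra hcon
      push_neg at hcon
      have : ∑ z ∈ Z.filter (fun z => iz z = i), q z ((tz z) • y) ≤ 0 :=
        Finset.sum_nonpos hcon
      linarith
    obtain ⟨z, hz, hqz⟩ := hex
    have hiz : iz z = i := (Finset.mem_filter.1 hz).2
    have hmem : (tz z) • y ∈ (tz z) • V (iz z) := hballz z (hq_supp z _ hqz)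
    rw [Set.smul_mem_smul_set_iff] at hmem
    rwa [hiz] at hmem
  -- the coefficient functions
  set c : X → G → ℝ := fun x t =>
    ∑ i ∈ I₀, (if t ∈ S i then w i t * h i (t⁻¹ • x) else 0) with hcdef
  set T : Finset G := I₀.biUnion S with hTdef
  have hc_nonneg : ∀ x t, 0 ≤ c x t := by
    intro x t
    apply Finset.sum_nonneg
    intro i _
    split
    · exact mul_nonneg (hw_nonneg i t) (hh_nonneg i _)
    · exact le_rfl
  have hc_suppT : ∀ x t, t ∉ T → c x t = 0 := by
    intro x t ht
    simp only [hcdef]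
    apply Finset.sum_eq_zero
    intro i hi
    rw [if_neg]
    intro hmem
    exact ht (Finset.mem_biUnion.2 ⟨i, hi, hmem⟩)
  have hc_wit : ∀ x t, c x t ≠ 0 → ∃ i, i ∈ I₀ ∧ t ∈ S i ∧ t⁻¹ • x ∈ V i := by
    intro x t hne
    simp only [hcdef] at hne
    obtain ⟨i, hi, hterm⟩ := Finset.exists_ne_zero_of_sum_ne_zero hne
    by_cases hts : t ∈ S i
    · rw [if_pos hts] at hterm
      have hhne : h i (t⁻¹ • x) ≠ 0 := right_ne_zero_of_mul hterm
      exact ⟨i, hi, hts, hh_supp i _ (lt_of_le_of_ne (hh_nonneg i _) (Ne.symm hhne))⟩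
    · rw [if_neg hts] at hterm
      exact absurd rfl hterm
  have hc_cont : ∀ t, Continuous (fun x => c x t) := by
    intro t
    simp only [hcdef]
    apply continuous_finset_sum
    intro i _
    by_cases hts : t ∈ S i
    · simp only [if_pos hts]
      exact continuous_const.mul ((hh_cont i).comp (continuous_const_smul _))
    · simp only [if_neg hts]
      exact continuous_const
  -- normalization
  set N : X → ℝ := fun x => ∑ t ∈ T, c x t with hNdef
  have hN_ge_one : ∀ x, 1 ≤ N x := by
    intro x
    have hx : x ∈ ⋃ z ∈ Z, Metric.ball z (rz z) := hZ (Set.mem_univ x)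
    rw [Set.mem_iUnion₂] at hx
    obtain ⟨z, hzZ, hxz⟩ := hx
    have hi₀ : iz z ∈ I₀ := Finset.mem_image_of_mem iz hzZ
    have ht₀T : tz z ∈ T := Finset.mem_biUnion.2 ⟨iz z, hi₀, htz z⟩
    have hq1 : q z ((tz z) • ((tz z)⁻¹ • x)) = 1 := by
      rw [smul_inv_smul]
      exact hq_one z x (le_of_lt hxz)
    have hzf : z ∈ Z.filter (fun z' => iz z' = iz z) := Finset.mem_filter.2 ⟨hzZ, rfl⟩
    have hsum_ge : 1 ≤ ∑ z' ∈ Z.filter (fun z' => iz z' = iz z),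
        q z' ((tz z') • ((tz z)⁻¹ • x)) := by
      calc (1:ℝ) = q z ((tz z) • ((tz z)⁻¹ • x)) := hq1.symm
        _ ≤ _ := Finset.single_le_sum
            (f := fun z' => q z' ((tz z') • ((tz z)⁻¹ • x)))
            (fun z' _ => hq_nonneg z' _) hzf
    have hh1 : 1 ≤ h (iz z) ((tz z)⁻¹ • x) := by
      simp only [hhdef]
      exact le_min le_rfl hsum_ge
    have hw1 : w (iz z) (tz z) = 1 := hw_deep _ _ (hdeepz z)
    have hc1 : 1 ≤ c x (tz z) := by
      simp only [hcdef]
      have hterm : 1 ≤ (if tz z ∈ S (iz z) then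
          w (iz z) (tz z) * h (iz z) ((tz z)⁻¹ • x) else 0) := by
        rw [if_pos (htz z), hw1, one_mul]
        exact hh1
      refine le_trans hterm (Finset.single_le_sum
        (f := fun i => if tz z ∈ S i then w i (tz z) * h i ((tz z)⁻¹ • x) else 0) ?_ hi₀)
      intro i _
      by_cases hmem : tz z ∈ S i
      · rw [if_pos hmem]
        exact mul_nonneg (hw_nonneg _ _) (hh_nonneg _ _)
      · rw [if_neg hmem]
    simp only [hNdef]
    exact le_trans hc1 (Finset.single_le_sum (fun t _ => hc_nonneg x t) ht₀T)
  have hN_pos : ∀ x, 0 < N x := fun x => lt_of_lt_of_le one_pos (hN_ge_one x)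
  have hN_ne : ∀ x, N x ≠ 0 := fun x => ne_of_gt (hN_pos x)
  have hN_cont : Continuous N := continuous_finset_sum _ fun t _ => hc_cont t
  -- the map
  set φ : X → lp (fun _ : G => ℝ) 1 :=
    fun x => ∑ t ∈ T, ((N x)⁻¹ * c x t) • lp.single 1 t (1:ℝ) with hφdef
  have hsingle : ∀ (t u : G) (r : ℝ),
      ((r • lp.single 1 t (1:ℝ) : lp (fun _ : G => ℝ) 1) : ∀ _ : G, ℝ) u
      = if u = t then r else 0 := by
    intro t u r
    rw [lp.coeFn_smul, Pi.smul_apply, lp.single_apply]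
    by_cases hut : u = t <;> simp [hut]
  have hφcoe : ∀ x u, (φ x : ∀ _ : G, ℝ) u = (N x)⁻¹ * c x u := by
    intro x u
    rw [hφdef]
    rw [lp.coeFn_sum, Finset.sum_apply]
    rw [Finset.sum_congr rfl (fun t _ => hsingle t u _)]
    rw [Finset.sum_ite_eq T u (fun t => (N x)⁻¹ * c x t)]
    split
    · rfl
    · rename_i hu
      rw [hc_suppT x u hu, mul_zero]
  refine ⟨φ, ?_, ?_, ?_, ?_, ?_⟩
  · -- continuity
    apply continuous_finset_sum
    intro t _
    exact ((hN_cont.inv₀ hN_ne).mul (hc_cont t)).smul continuous_const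
  · -- nonnegativity
    intro x t
    rw [hφcoe]
    exact mul_nonneg (inv_nonneg.2 (le_of_lt (hN_pos x))) (hc_nonneg x t)
  · -- sums to one
    intro x
    have : (∑' t : G, (φ x : ∀ _ : G, ℝ) t) = ∑ t ∈ T, (φ x : ∀ _ : G, ℝ) t := by
      apply tsum_eq_sum
      intro t ht
      rw [hφcoe, hc_suppT x t ht, mul_zero]
    rw [this]
    have : ∑ t ∈ T, (φ x : ∀ _ : G, ℝ) t = (N x)⁻¹ * N x := by
      rw [hNdef, Finset.mul_sum]
      exact Finset.sum_congr rfl fun t _ => hφcoe x t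
    rw [this, inv_mul_cancel₀ (hN_ne x)]
  · -- support
    intro x
    have hsupp_sub : Function.support ((φ x : ∀ _ : G, ℝ)) ⊆ ↑T := by
      intro t ht
      rw [Function.mem_support, hφcoe] at ht
      by_contra hT
      exact ht (by rw [hc_suppT x t hT, mul_zero])
    have hfin : (Function.support ((φ x : ∀ _ : G, ℝ))).Finite :=
      Set.Finite.subset T.finite_toSet hsupp_sub
    refine ⟨hfin, ?_⟩
    have hwit' : ∀ t ∈ Function.support ((φ x : ∀ _ : G, ℝ)),
        ∃ i, t ∈ S i ∧ t⁻¹ • x ∈ V i := by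
      intro t ht
      rw [Function.mem_support, hφcoe] at ht
      have hc0 : c x t ≠ 0 := fun h0 => ht (by rw [h0, mul_zero])
      obtain ⟨i, _, h1, h2⟩ := hc_wit x t hc0
      exact ⟨i, h1, h2⟩
    set g : G → Fin (d+1) := fun t =>
      if hex : ∃ i, t ∈ S i ∧ t⁻¹ • x ∈ V i then col hex.choose
      else ⟨0, Nat.succ_pos d⟩ with hgdef
    have hinj : Set.InjOn g (Function.support ((φ x : ∀ _ : G, ℝ))) := by
      intro a ha b hb hgab
      by_contra hne
      have hwa := hwit' a ha
      have hwb := hwit' b hb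
      have hga : g a = col hwa.choose := by rw [hgdef]; exact dif_pos hwa
      have hgb : g b = col hwb.choose := by rw [hgdef]; exact dif_pos hwb
      have hspeca := hwa.choose_spec
      have hspecb := hwb.choose_spec
      have hxa : x ∈ a • V hwa.choose := Set.mem_smul_set_iff_inv_smul_mem.2 hspeca.2
      have hxb : x ∈ b • V hwb.choose := Set.mem_smul_set_iff_inv_smul_mem.2 hspecb.2
      rw [hga, hgb] at hgab
      by_cases hii : hwa.choose = hwb.choose
      · have hdisj := htower hwa.choose a hspeca.1 b (by rw [hii]; exact hspecb.1) hne
        have hxb' : x ∈ b • V hwa.choose := by rw [hii]; exact hxb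
        exact Set.disjoint_left.1 hdisj hxa hxb'
      · have hdisj := hcol hwa.choose hwb.choose hii hgab
        have hma : x ∈ towerSpan G X (V hwa.choose) (S hwa.choose) :=
          Set.mem_iUnion₂.2 ⟨a, hspeca.1, hxa⟩
        have hmb : x ∈ towerSpan G X (V hwb.choose) (S hwb.choose) :=
          Set.mem_iUnion₂.2 ⟨b, hspecb.1, hxb⟩
        exact Set.disjoint_left.1 hdisj hma hmb
    calc (Function.support ((φ x : ∀ _ : G, ℝ))).ncard
        = (g '' Function.support ((φ x : ∀ _ : G, ℝ))).ncard :=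
          (Set.ncard_image_of_injOn hinj).symm
      _ ≤ (Set.univ : Set (Fin (d+1))).ncard :=
          Set.ncard_le_ncard (Set.subset_univ _) Set.finite_univ
      _ = d + 1 := by
          rw [Set.ncard_univ]
          simp
  · -- approximate equivariance
    intro s hs x
    have hsB : s ∈ B := hFB s hs
    have hsinvB : s⁻¹ ∈ B := hBinv s hsB
    set T' : Finset G := T ∪ T.image (fun u => s * u) with hT'def
    have hTT' : T ⊆ T' := Finset.subset_union_left
    have hzero : ∀ t : G, t ∉ T' →
        |(φ (s • x) : ∀ _ : G, ℝ) t - (φ x : ∀ _ : G, ℝ) (s⁻¹ * t)| = 0 := by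
      intro t ht
      rw [hT'def, Finset.mem_union, not_or] at ht
      have h1 : c (s • x) t = 0 := hc_suppT _ _ ht.1
      have h2 : c x (s⁻¹ * t) = 0 := by
        apply hc_suppT
        intro hmem
        exact ht.2 (Finset.mem_image.2 ⟨s⁻¹ * t, hmem, by rw [mul_inv_cancel_left]⟩)
      rw [hφcoe, hφcoe, h1, h2, mul_zero, mul_zero, sub_zero, abs_zero]
    rw [tsum_eq_sum hzero]
    have hApos := hN_pos (s • x)
    have hBpos := hN_pos x
    have hAne := hN_ne (s • x)
    have hBne := hN_ne x
    have hA1 := hN_ge_one (s • x)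
    have hB1' := hN_ge_one x
    have harg : ∀ t : G, (s⁻¹ * t)⁻¹ • x = t⁻¹ • (s • x) := by
      intro t
      rw [mul_inv_rev, inv_inv, mul_smul]
    set D : I → G → ℝ := fun i t =>
      |(if t ∈ S i then w i t * h i (t⁻¹ • (s • x)) else 0) -
        (if s⁻¹ * t ∈ S i then w i (s⁻¹ * t) * h i (t⁻¹ • (s • x)) else 0)| with hDdef
    have hD_nonneg : ∀ i t, 0 ≤ D i t := fun i t => abs_nonneg _
    have hD_ne : ∀ i t, D i t ≠ 0 →
        t ∈ S i ∧ s⁻¹ * t ∈ S i ∧ 0 < h i (t⁻¹ • (s • x)) := by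
      intro i t hD
      simp only [hDdef] at hD
      by_cases h1 : t ∈ S i <;> by_cases h2 : s⁻¹ * t ∈ S i
      · refine ⟨h1, h2, ?_⟩
        rcases lt_or_eq_of_le (hh_nonneg i (t⁻¹ • (s • x))) with hlt | heq
        · exact hlt
        · exact absurd (by
            rw [if_pos h1, if_pos h2, ← heq, mul_zero, mul_zero, sub_zero, abs_zero]) hD
      · exfalso
        apply hD
        have hw0 : w i t = 0 := by
          rcases lt_or_eq_of_le (hw_nonneg i t) with hlt | heq
          · exact absurd (hw_pos_mem i t hlt s⁻¹ hsinvB) h2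
          · exact heq.symm
        rw [if_pos h1, if_neg h2, hw0, zero_mul, sub_zero, abs_zero]
      · exfalso
        apply hD
        have hw0 : w i (s⁻¹ * t) = 0 := by
          rcases lt_or_eq_of_le (hw_nonneg i (s⁻¹ * t)) with hlt | heq
          · exfalso
            apply h1
            have := hw_pos_mem i (s⁻¹ * t) hlt s hsB
            rwa [mul_inv_cancel_left] at this
          · exact heq.symm
        rw [if_neg h1, if_pos h2, hw0, zero_mul, zero_sub, abs_neg, abs_zero]
      · exfalso
        apply hD
        rw [if_neg h1, if_neg h2, sub_zero, abs_zero]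
    have hD_le : ∀ i t, D i t ≤ 1/(n:ℝ) := by
      intro i t
      by_cases hD0 : D i t = 0
      · rw [hD0]
        positivity
      · obtain ⟨h1, h2, hh⟩ := hD_ne i t hD0
        simp only [hDdef, if_pos h1, if_pos h2]
        rw [← sub_mul, abs_mul]
        calc |w i t - w i (s⁻¹ * t)| * |h i (t⁻¹ • (s • x))|
            ≤ (1/(n:ℝ)) * 1 := by
              apply mul_le_mul (hw_lip i t s hsB)
              · rw [abs_of_nonneg (hh_nonneg _ _)]
                exact hh_le_one _ _
              · exact abs_nonneg _
              · positivity
          _ = 1/(n:ℝ) := mul_one _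
    have hD_unique : ∀ i t₁ t₂, D i t₁ ≠ 0 → D i t₂ ≠ 0 → t₁ = t₂ := by
      intro i t₁ t₂ hD1 hD2
      obtain ⟨hm1, _, hh1⟩ := hD_ne i t₁ hD1
      obtain ⟨hm2, _, hh2⟩ := hD_ne i t₂ hD2
      by_contra hne
      have hx1 : s • x ∈ t₁ • V i := Set.mem_smul_set_iff_inv_smul_mem.2 (hh_supp i _ hh1)
      have hx2 : s • x ∈ t₂ • V i := Set.mem_smul_set_iff_inv_smul_mem.2 (hh_supp i _ hh2)
      exact Set.disjoint_left.1 (htower i t₁ hm1 t₂ hm2 hne) hx1 hx2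
    have hinner : ∀ i, ∑ t ∈ T', D i t ≤ 1/(n:ℝ) := by
      intro i
      by_cases hex : ∃ t₀ ∈ T', D i t₀ ≠ 0
      · obtain ⟨t₀, ht₀, hD₀⟩ := hex
        have heq : ∑ t ∈ T', D i t = D i t₀ := by
          apply Finset.sum_eq_single_of_mem t₀ ht₀
          intro t ht hne
          by_contra hD
          exact hne (hD_unique i t t₀ hD hD₀)
        rw [heq]
        exact hD_le i t₀
      · push_neg at hex
        rw [Finset.sum_eq_zero (fun t ht => hex t ht)]
        positivity
    set Act : Finset I := I₀.filter (fun i => ∃ t ∈ S i, s • x ∈ t • V i) with hActdef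
    have hD_act : ∀ i ∈ I₀, i ∉ Act → ∀ t, D i t = 0 := by
      intro i hi hact t
      by_contra hD
      obtain ⟨h1, _, hh⟩ := hD_ne i t hD
      exact hact (Finset.mem_filter.2 ⟨hi, t, h1,
        Set.mem_smul_set_iff_inv_smul_mem.2 (hh_supp i _ hh)⟩)
    have hAct_card : Act.card ≤ d + 1 := by
      have hinjA : Set.InjOn col ↑Act := by
        intro i hi j hj hij
        by_contra hne
        obtain ⟨ti, hti, hxi⟩ := (Finset.mem_filter.1 (Finset.mem_coe.1 hi)).2
        obtain ⟨tj, htj, hxj⟩ := (Finset.mem_filter.1 (Finset.mem_coe.1 hj)).2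
        have hdisj := hcol i j hne hij
        have hma : s • x ∈ towerSpan G X (V i) (S i) := Set.mem_iUnion₂.2 ⟨ti, hti, hxi⟩
        have hmb : s • x ∈ towerSpan G X (V j) (S j) := Set.mem_iUnion₂.2 ⟨tj, htj, hxj⟩
        exact Set.disjoint_left.1 hdisj hma hmb
      calc Act.card ≤ (Finset.univ : Finset (Fin (d+1))).card :=
            Finset.card_le_card_of_injOn col (fun a _ => Finset.mem_univ _) hinjA
        _ = d + 1 := by simp
    have hsplit : ∀ t ∈ T', |c (s • x) t - c x (s⁻¹ * t)| ≤ ∑ i ∈ I₀, D i t := by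
      intro t _
      simp only [hcdef]
      rw [← Finset.sum_sub_distrib]
      refine le_trans (Finset.abs_sum_le_sum_abs _ _) ?_
      apply Finset.sum_le_sum
      intro i _
      simp only [hDdef]
      rw [harg t]
    have key1 : ∑ t ∈ T', |c (s • x) t - c x (s⁻¹ * t)| ≤ ((d:ℝ)+1)/n := by
      calc ∑ t ∈ T', |c (s • x) t - c x (s⁻¹ * t)|
          ≤ ∑ t ∈ T', ∑ i ∈ I₀, D i t := Finset.sum_le_sum hsplit
        _ = ∑ i ∈ I₀, ∑ t ∈ T', D i t := Finset.sum_comm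
        _ = ∑ i ∈ Act, ∑ t ∈ T', D i t := by
            symm
            apply Finset.sum_subset (Finset.filter_subset _ _)
            intro i hi hact
            exact Finset.sum_eq_zero fun t _ => hD_act i hi hact t
        _ ≤ ∑ _i ∈ Act, 1/(n:ℝ) := Finset.sum_le_sum fun i _ => hinner i
        _ = (Act.card : ℝ) * (1/(n:ℝ)) := by rw [Finset.sum_const, nsmul_eq_mul]
        _ ≤ ((d:ℝ)+1) * (1/(n:ℝ)) := by
            apply mul_le_mul_of_nonneg_right _ (by positivity)
            exact_mod_cast hAct_card
        _ = ((d:ℝ)+1)/n := by ring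
    have key2 : ∑ t ∈ T', c (s • x) t = N (s • x) := by
      simp only [hNdef]
      exact (Finset.sum_subset hTT' (fun t _ ht => hc_suppT _ t ht)).symm
    have key3 : ∑ t ∈ T', c x (s⁻¹ * t) = N x := by
      have himg : ∑ u ∈ T'.image (fun t => s⁻¹ * t), c x u = ∑ t ∈ T', c x (s⁻¹ * t) :=
        Finset.sum_image (fun a _ b _ hab => mul_left_cancel hab)
      rw [← himg]
      simp only [hNdef]
      symm
      apply Finset.sum_subset
      · intro u hu
        apply Finset.mem_image.2
        refine ⟨s * u, ?_, by rw [inv_mul_cancel_left]⟩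
        rw [hT'def]
        exact Finset.mem_union_right _ (Finset.mem_image_of_mem _ hu)
      · intro u _ hu
        exact hc_suppT x u hu
    have key4 : |N (s • x) - N x| ≤ ((d:ℝ)+1)/n := by
      rw [← key2, ← key3, ← Finset.sum_sub_distrib]
      exact le_trans (Finset.abs_sum_le_sum_abs _ _) key1
    have hstep : ∀ t ∈ T', |(φ (s • x) : ∀ _ : G, ℝ) t - (φ x : ∀ _ : G, ℝ) (s⁻¹ * t)|
        ≤ (N (s • x))⁻¹ * |c (s • x) t - c x (s⁻¹ * t)|
          + |(N (s • x))⁻¹ - (N x)⁻¹| * c x (s⁻¹ * t) := by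
      intro t _
      rw [hφcoe, hφcoe]
      have hring : (N (s • x))⁻¹ * c (s • x) t - (N x)⁻¹ * c x (s⁻¹ * t)
          = (N (s • x))⁻¹ * (c (s • x) t - c x (s⁻¹ * t))
            + ((N (s • x))⁻¹ - (N x)⁻¹) * c x (s⁻¹ * t) := by ring
      rw [hring]
      refine le_trans (abs_add_le _ _) ?_
      rw [abs_mul, abs_mul, abs_of_nonneg (inv_nonneg.2 (le_of_lt hApos)),
        abs_of_nonneg (hc_nonneg x _)]
    have hinvdiff : |(N (s • x))⁻¹ - (N x)⁻¹| * N x ≤ ((d:ℝ)+1)/n := by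
      have heq1 : |(N (s • x))⁻¹ - (N x)⁻¹| = |N (s • x) - N x| / (N (s • x) * N x) := by
        rw [inv_sub_inv hAne hBne, abs_div, abs_of_pos (mul_pos hApos hBpos), abs_sub_comm]
      have heq2 : |N (s • x) - N x| / (N (s • x) * N x) * N x
          = |N (s • x) - N x| / N (s • x) := by
        rw [div_mul_eq_mul_div, mul_comm (N (s • x)) (N x), ← div_div,
          mul_div_assoc, div_self hBne, mul_one]
      rw [heq1, heq2]
      calc |N (s • x) - N x| / N (s • x) ≤ |N (s • x) - N x| :=
            div_le_self (abs_nonneg _) hA1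
        _ ≤ ((d:ℝ)+1)/n := key4
    calc ∑ t ∈ T', |(φ (s • x) : ∀ _ : G, ℝ) t - (φ x : ∀ _ : G, ℝ) (s⁻¹ * t)|
        ≤ ∑ t ∈ T', ((N (s • x))⁻¹ * |c (s • x) t - c x (s⁻¹ * t)|
            + |(N (s • x))⁻¹ - (N x)⁻¹| * c x (s⁻¹ * t)) := Finset.sum_le_sum hstep
      _ = (N (s • x))⁻¹ * (∑ t ∈ T', |c (s • x) t - c x (s⁻¹ * t)|)
          + |(N (s • x))⁻¹ - (N x)⁻¹| * (∑ t ∈ T', c x (s⁻¹ * t)) := by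
          rw [Finset.sum_add_distrib, Finset.mul_sum, Finset.mul_sum]
      _ = (N (s • x))⁻¹ * (∑ t ∈ T', |c (s • x) t - c x (s⁻¹ * t)|)
          + |(N (s • x))⁻¹ - (N x)⁻¹| * N x := by rw [key3]
      _ ≤ 1 * (((d:ℝ)+1)/n) + ((d:ℝ)+1)/n := by
          apply add_le_add _ hinvdiff
          apply mul_le_mul _ key1 _ _
          · exact inv_le_one_of_one_le₀ hA1
          · exact Finset.sum_nonneg fun t _ => abs_nonneg _
          · norm_num
      _ < ε := by
          rw [one_mul]
          have hring2 : ((d:ℝ)+1)/n + ((d:ℝ)+1)/n = 2*((d:ℝ)+1)/n := by ring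
          rw [hring2]
          exact hn

/-- Theorem 5.2: the amenability dimension is at most the tower dimension. -/
theorem amdim_le_towdim
    (G X : Type) [Group G] [Countable G]
    [TopologicalSpace X] [CompactSpace X] [TopologicalSpace.MetrizableSpace X]
    [MulAction G X] [ContinuousConstSMul G X]
    (hfree : IsFreeAction G X) :
    amdim G X ≤ towdim G X := by
  apply sInf_le_sInf
  rintro m ⟨d, rfl, hd⟩
  exact ⟨d, rfl, towDimLE_amDimLE G X d hd⟩

end Kerr
end

section
/- A free continuous action G ↷ X of a countable discrete group on a compact metric space is almost finite if and only if for every n ∈ ℕ, finite set K ⊆ G, and δ > 0 there are an open castle {(Vᵢ,Sᵢ)}_{i∈I} whose shapes are (K,δ)-invariant, whose levels have diameter less than δ, and with the additional property that for each i the sets s·cl(Vᵢ) for s ∈ Sᵢ are pairwise disjoint, together with sets Sᵢ' ⊆ Sᵢ with |Sᵢ'| < |Sᵢ|/n such that X ∖ ⊔ᵢ SᵢVᵢ ≺ ⊔ᵢ Sᵢ'Vᵢ. -/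
open Pointwise MeasureTheory
open scoped ENNReal NNReal

namespace Kerr

/-- Lemma 10.1: in the definition of almost finiteness one may additionally
require that, for each tower, the translates of the closure of the base are pairwise
disjoint. -/
theorem almostFinite_iff_closure_disjoint
    (G X : Type) [Group G] [Countable G] [DecidableEq G]
    [MetricSpace X] [CompactSpace X]
    [MulAction G X] [ContinuousConstSMul G X]
    (hfree : IsFreeAction G X) :
    AlmostFinite G X ↔
      ∀ (n : ℕ) (K : Finset G) (δ : ℝ), 0 < n → 0 < δ →
        ∃ (I : Type) (_ : Fintype I) (V : I → Set X) (S S' : I → Finset G),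
          (∀ i, IsOpen (V i)) ∧ IsCastle G X V S ∧
          (∀ i, ∀ s ∈ S i, ∀ t ∈ S i, s ≠ t →
            Disjoint (s • closure (V i)) (t • closure (V i))) ∧
          (∀ i, FolnerInv G K δ (S i)) ∧
          (∀ i, ∀ s ∈ S i, Metric.diam (s • V i) < δ) ∧
          (∀ i, S' i ⊆ S i) ∧
          (∀ i, ((S' i).card : ℝ) < ((S i).card : ℝ) / (n : ℝ)) ∧
          SubEquivM G X 0 (Set.univ \ ⋃ i, towerSpan G X (V i) (S i))
            (⋃ i, towerSpan G X (V i) (S' i)) := by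
  constructor
  · -- forward direction
    intro hAF n K δ hn hδ
    obtain ⟨I, hI, V, S, S', hVopen, hCastle, hFol, hdiam, hS'S, hcard, hsub⟩ :=
      hAF n K δ hn hδ
    -- the complement of the castle span
    have hR0open : IsOpen (⋃ i, towerSpan G X (V i) (S i)) :=
      isOpen_iUnion fun i => isOpen_biUnion fun s _ => (hVopen i).smul s
    have hCclosed : IsClosed (Set.univ \ ⋃ i, towerSpan G X (V i) (S i)) :=
      isClosed_univ.sdiff hR0open
    obtain ⟨𝒰, sU, col, hUo, hCcov, hUB, hUdisj⟩ :=
      hsub _ hCclosed (subset_refl _)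
    have hUdisj' : ∀ u ∈ 𝒰, ∀ v ∈ 𝒰, u ≠ v → Disjoint (sU u • u) (sU v • v) :=
      fun u hu v hv huv => hUdisj u hu v hv huv (Subsingleton.elim (α := Fin 1) _ _)
    -- first shrinking: the cover of X by 𝒰 and the castle levels
    set ι₁ := (↥𝒰) ⊕ (Σ i : I, ↥(S i)) with hι₁
    set u₁ : ι₁ → Set X :=
      Sum.elim (fun U => (U : Set X)) (fun p => (p.2 : G) • V p.1) with hu₁
    have hu₁o : ∀ j, IsOpen (u₁ j) := by
      rintro (U | ⟨i, s⟩)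
      · exact hUo U U.2
      · exact (hVopen i).smul _
    have hu₁cov : Set.univ ⊆ ⋃ j, u₁ j := by
      intro x _
      by_cases hx : x ∈ ⋃ i, towerSpan G X (V i) (S i)
      · obtain ⟨i, hi⟩ := Set.mem_iUnion.mp hx
        obtain ⟨s, hs, hxs⟩ := Set.mem_iUnion₂.mp hi
        exact Set.mem_iUnion.mpr ⟨Sum.inr ⟨i, ⟨s, hs⟩⟩, hxs⟩
      · have : x ∈ Set.univ \ ⋃ i, towerSpan G X (V i) (S i) := ⟨trivial, hx⟩
        obtain ⟨U, hU, hxU⟩ := Set.mem_iUnion₂.mp (hCcov this)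
        exact Set.mem_iUnion.mpr ⟨Sum.inl ⟨U, hU⟩, hxU⟩
    obtain ⟨v, hvcov, hvo, hvcl⟩ :=
      exists_subset_iUnion_closure_subset isClosed_univ hu₁o
        (fun x _ => Set.toFinite _) hu₁cov
    -- second shrinking: the images of closures of the 𝒰-part inside ⊔ S' V
    set T : Set X := ⋃ U : ↥𝒰, sU U • closure (v (Sum.inl U)) with hT
    have hTclosed : IsClosed T :=
      isClosed_iUnion_of_finite fun U => isClosed_closure.smul _
    set u₂ : (Σ i : I, ↥(S' i)) → Set X := fun p => (p.2 : G) • V p.1 with hu₂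
    have hu₂o : ∀ p, IsOpen (u₂ p) := fun p => (hVopen p.1).smul _
    have hTcov : T ⊆ ⋃ p, u₂ p := by
      rintro x hx
      obtain ⟨U, hxU⟩ := Set.mem_iUnion.mp hx
      have hx' : x ∈ sU U • (U : Set X) :=
        Set.smul_set_mono (hvcl (Sum.inl U)) hxU
      have := hUB U U.2 hx'
      obtain ⟨i, hi⟩ := Set.mem_iUnion.mp this
      obtain ⟨s, hs, hxs⟩ := Set.mem_iUnion₂.mp hi
      exact Set.mem_iUnion.mpr ⟨⟨i, ⟨s, hs⟩⟩, hxs⟩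
    obtain ⟨w, hwcov, hwo, hwcl⟩ :=
      exists_subset_iUnion_closure_subset hTclosed hu₂o
        (fun x _ => Set.toFinite _) hTcov
    -- the compact kernel of each tower base
    set Kset : I → Set X := fun i =>
      (⋃ s : ↥(S i), (s : G)⁻¹ • closure (v (Sum.inr ⟨i, s⟩))) ∪
        (⋃ s' : ↥(S' i), (s' : G)⁻¹ • closure (w ⟨i, s'⟩)) with hKset
    have hKclosed : ∀ i, IsClosed (Kset i) := fun i =>
      IsClosed.union
        (isClosed_iUnion_of_finite fun s => isClosed_closure.smul _)
        (isClosed_iUnion_of_finite fun s' => isClosed_closure.smul _)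
    have hKsub : ∀ i, Kset i ⊆ V i := by
      intro i
      apply Set.union_subset
      · refine Set.iUnion_subset fun s => ?_
        have h1 : closure (v (Sum.inr ⟨i, s⟩)) ⊆ (s : G) • V i := hvcl _
        intro x hx
        obtain ⟨y, hy, rfl⟩ := hx
        obtain ⟨z, hz, rfl⟩ := h1 hy
        simpa using hz
      · refine Set.iUnion_subset fun s' => ?_
        have h1 : closure (w ⟨i, s'⟩) ⊆ (s' : G) • V i := hwcl _
        intro x hx
        obtain ⟨y, hy, rfl⟩ := hx
        obtain ⟨z, hz, rfl⟩ := h1 hy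
        simpa using hz
    have hWex : ∀ i : I, ∃ Wi : Set X, IsOpen Wi ∧ Kset i ⊆ Wi ∧ closure Wi ⊆ V i :=
      fun i => normal_exists_closure_subset (hKclosed i) (hVopen i) (hKsub i)
    choose W hWopen hKW hclW using hWex
    have hWV : ∀ i, W i ⊆ V i := fun i => subset_closure.trans (hclW i)
    have hspan : ∀ i (S₀ : Finset G),
        towerSpan G X (W i) S₀ ⊆ towerSpan G X (V i) S₀ := fun i S₀ =>
      Set.iUnion₂_mono fun s _ => Set.smul_set_mono (hWV i)
    refine ⟨I, hI, W, S, S', hWopen, ?_, ?_, hFol, ?_, hS'S, hcard, ?_⟩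
    · exact ⟨fun i s hs t ht hst =>
        ((hCastle.1 i s hs t ht hst).mono (Set.smul_set_mono (hWV i))
          (Set.smul_set_mono (hWV i))),
        fun i j hij => (hCastle.2 i j hij).mono (hspan i _) (hspan j _)⟩
    · exact fun i s hs t ht hst =>
        (hCastle.1 i s hs t ht hst).mono (Set.smul_set_mono (hclW i))
          (Set.smul_set_mono (hclW i))
    · intro i s hs
      calc Metric.diam (s • W i) ≤ Metric.diam (s • V i) :=
            Metric.diam_mono (Set.smul_set_mono (hWV i))
              (isCompact_univ.isBounded.subset (Set.subset_univ _))
        _ < δ := hdiam i s hs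
    · -- the subequivalence for the shrunken castle
      intro C' hC'cl hC'sub
      set R : Set X := ⋃ i, towerSpan G X (W i) (S' i) with hRdef
      have hRopen : IsOpen R :=
        isOpen_iUnion fun i => isOpen_biUnion fun s _ => (hWopen i).smul s
      classical
      set f : Set X → Set X := fun u => u ∩ (sU u)⁻¹ • R with hf
      set P : Set X → Set X :=
        fun a => if h : ∃ u ∈ 𝒰, f u = a then h.choose else ∅ with hP
      have hPspec : ∀ a ∈ 𝒰.image f, P a ∈ 𝒰 ∧ f (P a) = a := by
        intro a ha
        obtain ⟨u, hu, hfu⟩ := Finset.mem_image.mp ha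
        have h : ∃ u ∈ 𝒰, f u = a := ⟨u, hu, hfu⟩
        simp only [hP, dif_pos h]
        exact ⟨h.choose_spec.1, h.choose_spec.2⟩
      refine ⟨𝒰.image f, fun a => sU (P a), fun _ => 0, ?_, ?_, ?_, ?_⟩
      · -- open
        intro a ha
        have := (hPspec a ha).2
        rw [← this]
        exact ((hUo _ (hPspec a ha).1).inter (hRopen.smul _))
      · -- cover
        intro x hx
        have hxnot : x ∉ ⋃ i, towerSpan G X (W i) (S i) := (hC'sub hx).2
        obtain ⟨j, hxj⟩ := Set.mem_iUnion.mp (hvcov (Set.mem_univ x))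
        rcases j with U | ⟨i, s⟩
        · -- the 𝒰 part
          have hxU : x ∈ (U : Set X) := (hvcl (Sum.inl U)) (subset_closure hxj)
          have hxT : sU U • x ∈ T := by
            refine Set.mem_iUnion.mpr ⟨U, ?_⟩
            exact Set.smul_mem_smul_set (subset_closure hxj)
          obtain ⟨⟨i, s'⟩, hxw⟩ := Set.mem_iUnion.mp (hwcov hxT)
          have hmem : sU U • x ∈ (s' : G) • W i := by
            have h1 : (s' : G)⁻¹ • closure (w ⟨i, s'⟩) ⊆ W i :=
              (Set.subset_union_right.trans (hKW i)).trans' <|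
                Set.subset_iUnion (fun t : ↥(S' i) => (t : G)⁻¹ • closure (w ⟨i, t⟩)) s'
            have h2 : (s' : G)⁻¹ • (sU U • x) ∈ (s' : G)⁻¹ • closure (w ⟨i, s'⟩) :=
              Set.smul_mem_smul_set (subset_closure hxw)
            have := h1 h2
            rwa [Set.mem_smul_set_iff_inv_smul_mem]
          have hmemR : sU U • x ∈ R := by
            refine Set.mem_iUnion.mpr ⟨i, Set.mem_iUnion₂.mpr ⟨(s' : G), s'.2, hmem⟩⟩
          have hxf : x ∈ f U := by
            refine ⟨hxU, ?_⟩
            rw [Set.mem_smul_set_iff_inv_smul_mem]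
            simpa using hmemR
          exact Set.mem_iUnion₂.mpr ⟨f U, Finset.mem_image_of_mem f U.2, hxf⟩
        · -- the tower part: contradiction
          exfalso
          apply hxnot
          have h1 : (s : G)⁻¹ • closure (v (Sum.inr ⟨i, s⟩)) ⊆ W i :=
            (Set.subset_union_left.trans (hKW i)).trans' <|
              Set.subset_iUnion
                (fun t : ↥(S i) => (t : G)⁻¹ • closure (v (Sum.inr ⟨i, t⟩))) s
          have h2 : (s : G)⁻¹ • x ∈ (s : G)⁻¹ • closure (v (Sum.inr ⟨i, s⟩)) :=
            Set.smul_mem_smul_set (subset_closure hxj)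
          have hxW : x ∈ (s : G) • W i := by
            rw [Set.mem_smul_set_iff_inv_smul_mem]; exact h1 h2
          exact Set.mem_iUnion.mpr ⟨i, Set.mem_iUnion₂.mpr ⟨(s : G), s.2, hxW⟩⟩
      · -- translated into the target
        intro a ha
        obtain ⟨hqmem, hfa⟩ := hPspec a ha
        set q := P a with hq
        show sU q • a ⊆ _
        rw [← hfa]
        intro x hx
        obtain ⟨y, hy, rfl⟩ := hx
        have hy2 : y ∈ (sU q)⁻¹ • R := hy.2
        obtain ⟨z, hz, rfl⟩ := hy2
        simpa using hz
      · -- disjointness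
        intro a ha b hb hab _
        obtain ⟨hqa, hfa⟩ := hPspec a ha
        obtain ⟨hqb, hfb⟩ := hPspec b hb
        set qa := P a with hqadef
        set qb := P b with hqbdef
        have hne : qa ≠ qb := by
          intro h
          apply hab
          rw [← hfa, ← hfb, h]
        have hd := hUdisj' qa hqa qb hqb hne
        have hsa : sU qa • a ⊆ sU qa • qa := by
          rw [← hfa]; exact Set.smul_set_mono Set.inter_subset_left
        have hsb : sU qb • b ⊆ sU qb • qb := by
          rw [← hfb]; exact Set.smul_set_mono Set.inter_subset_left
        exact hd.mono hsa hsb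
  · -- reverse direction
    intro h n K δ hn hδ
    obtain ⟨I, hI, V, S, S', h1, h2, _h3, h4, h5, h6, h7, h8⟩ := h n K δ hn hδ
    exact ⟨I, hI, V, S, S', h1, h2, h4, h5, h6, h7, h8⟩


end Kerr
end
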